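/- arXiv:1009.4852 — 5 statements merged into one kernel-verified Lean document; each statement's English description precedes it below -/
import Mathlib

section
/- Let κ>1, p̄≥1, C≥1 and γ>0. Suppose f is a μ-measurable function on U₁ such that |f|_{L_{βκ}(U_{σ'})} ≤ (C(1+β)^γ/(σ−σ')^γ)^{1/β} · |f|_{L_β(U_σ)} for all 0<σ'<σ≤1 and all β>0. Then there exist a constant M depending only on C, γ, κ, p̄ and a constant γ₀ depending only on γ and κ such that for all δ∈(0,1) and all p∈(0,p̄] one has ess sup_{U_δ}|f| ≤ (M/(1−δ)^{γ₀})^{1/p} · |f|_{L_p(U₁)}. -/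
open MeasureTheory

lemma aux_prod_rpow (x : ℝ) (hx : 0 < x) (g : ℕ → ℝ) (n : ℕ) :
    ∏ k ∈ Finset.range n, x ^ (g k) = x ^ (∑ k ∈ Finset.range n, g k) := by
  induction n with
  | zero => simp
  | succ n ih =>
    rw [Finset.prod_range_succ, Finset.sum_range_succ, ih, ← Real.rpow_add hx]

lemma aux_pow_rpow (x : ℝ) (hx : 0 ≤ x) (γ : ℝ) (k : ℕ) : (x ^ k) ^ γ = (x ^ γ) ^ k := by
  rw [← Real.rpow_natCast x k, ← Real.rpow_mul hx, mul_comm, Real.rpow_mul hx,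
    Real.rpow_natCast]

lemma aux_one_le_mul3 {a b c : ℝ} (ha : 1 ≤ a) (hb : 1 ≤ b) (hc : 1 ≤ c) :
    1 ≤ a * b * c := by
  have hab : 1 ≤ a * b := by nlinarith
  nlinarith [mul_nonneg (sub_nonneg.mpr hab) (sub_nonneg.mpr hc)]

lemma aux_geom_sum_le (x : ℝ) (h0 : 0 ≤ x) (h1 : x < 1) (n : ℕ) :
    ∑ k ∈ Finset.range n, x ^ k ≤ (1 - x)⁻¹ := by
  have := Summable.sum_le_tsum (Finset.range n) (fun i _ => pow_nonneg h0 i)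
    (summable_geometric_of_lt_one h0 h1)
  rwa [tsum_geometric_of_lt_one h0 h1] at this

set_option maxHeartbeats 2000000 in
/-- Moser iteration, first form: from the reverse-Hölder type iteration
inequality one obtains an essential supremum bound on `U δ`. -/
theorem moser_iteration_sup (κ pbar C γ : ℝ) (hκ : 1 < κ) (hpbar : 1 ≤ pbar)
    (hC : 1 ≤ C) (hγ : 0 < γ) :
    ∃ M γ₀ : ℝ,
      ∀ (X : Type) (_ : MeasurableSpace X) (μ : Measure X), IsFiniteMeasure μ →
      ∀ U : ℝ → Set X,
        (∀ σ' σ : ℝ, 0 < σ' → σ' ≤ σ → σ ≤ 1 → U σ' ⊆ U σ) →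
      ∀ f : X → ℝ, Measurable f →
        (∀ σ' σ β : ℝ, 0 < σ' → σ' < σ → σ ≤ 1 → 0 < β →
          (∫ x in U σ', |f x| ^ (β * κ) ∂μ) ^ (1 / (β * κ)) ≤
            (C * (1 + β) ^ γ / (σ - σ') ^ γ) ^ (1 / β) *
              (∫ x in U σ, |f x| ^ β ∂μ) ^ (1 / β)) →
      ∀ δ ∈ Set.Ioo (0:ℝ) 1, ∀ p ∈ Set.Ioc (0:ℝ) pbar,
        essSup (fun x => |f x|) (μ.restrict (U δ)) ≤
          (M / (1 - δ) ^ γ₀) ^ (1 / p) *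
            (∫ x in U (1:ℝ), |f x| ^ p ∂μ) ^ (1 / p) := by
  have hκ0 : (0:ℝ) < κ := lt_trans one_pos hκ
  set θ : ℝ := (1 + κ) / 2 with hθdef
  have hθ1 : 1 < θ := by rw [hθdef]; linarith
  have hθκ : θ < κ := by rw [hθdef]; linarith
  have hlogθ : 0 < Real.log θ := Real.log_pos hθ1
  set S : ℝ := (1 - κ⁻¹)⁻¹ with hSdef
  set S₂ : ℝ := (Real.log θ)⁻¹ * (1 - θ/κ)⁻¹ with hS2def
  set D₀ : ℝ := C * (1 + pbar) ^ γ * 2 ^ γ with hD0def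
  set r : ℝ := (2 * κ) ^ γ with hrdef
  refine ⟨D₀ ^ S * r ^ S₂, γ * S, ?_⟩
  intro X mX μ hfin U hU f hf hiter δ hδ p hp
  obtain ⟨hδ0, hδ1⟩ := hδ
  obtain ⟨hp0, hppbar⟩ := hp
  have h1δ : 0 < 1 - δ := by linarith
  -- basic quantities
  set q : ℕ → ℝ := fun n => p * κ ^ n with hqdef
  have hqpos : ∀ n, 0 < q n := fun n => mul_pos hp0 (pow_pos hκ0 n)
  set σs : ℕ → ℝ := fun n => δ + (1 - δ) / 2 ^ n with hσdef
  have hσ0 : σs 0 = 1 := by simp [hσdef]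
  have hσδ : ∀ n, δ < σs n := by
    intro n
    have : (0:ℝ) < (1 - δ) / 2 ^ n := div_pos h1δ (pow_pos two_pos n)
    simp only [hσdef]; linarith
  have hσle1 : ∀ n, σs n ≤ 1 := by
    intro n
    have h2 : (1:ℝ) ≤ 2 ^ n := one_le_pow₀ (by norm_num)
    have : (1 - δ) / 2 ^ n ≤ 1 - δ := by
      rw [div_le_iff₀ (pow_pos two_pos n)]
      nlinarith
    simp only [hσdef]; linarith
  have hσdiff : ∀ n, σs n - σs (n + 1) = (1 - δ) / 2 ^ (n + 1) := by
    intro n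
    have h2n : (2:ℝ) ^ n ≠ 0 := (pow_pos two_pos n).ne'
    simp only [hσdef]
    field_simp
    ring
  have hσlt : ∀ n, σs (n + 1) < σs n := by
    intro n
    have h := hσdiff n
    have hpos : (0:ℝ) < (1 - δ) / 2 ^ (n + 1) := div_pos h1δ (pow_pos two_pos _)
    rw [← h] at hpos
    linarith
  set B : ℕ → ℝ := fun n => C * (1 + q n) ^ γ * ((2:ℝ) ^ (n + 1) / (1 - δ)) ^ γ with hBdef
  set I : ℕ → ℝ := fun n => ∫ x in U (σs n), |f x| ^ (q n) ∂μ with hIdef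
  have hInn : ∀ n, 0 ≤ I n := fun n =>
    integral_nonneg fun x => Real.rpow_nonneg (abs_nonneg _) _
  have hq_succ : ∀ n, q n * κ = q (n + 1) := by
    intro n; simp only [hqdef, pow_succ]; ring
  have hBpos : ∀ n, 0 < B n := by
    intro n
    have h1q : (0:ℝ) < 1 + q n := by have := hqpos n; linarith
    have h2d : (0:ℝ) < (2:ℝ) ^ (n+1) / (1 - δ) := div_pos (pow_pos two_pos _) h1δ
    exact mul_pos (mul_pos (lt_of_lt_of_le one_pos hC) (Real.rpow_pos_of_pos h1q γ))
      (Real.rpow_pos_of_pos h2d γ)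
  -- the iteration constant identity
  have hBeq : ∀ n, C * (1 + q n) ^ γ / (σs n - σs (n + 1)) ^ γ = B n := by
    intro n
    rw [hσdiff n]
    have h1 : (0:ℝ) < (1 - δ) / 2 ^ (n+1) := div_pos h1δ (pow_pos two_pos _)
    have h2 : ((1 - δ) / 2 ^ (n+1) : ℝ) = ((2:ℝ) ^ (n+1) / (1 - δ))⁻¹ := by
      rw [inv_div]
    rw [h2, Real.inv_rpow (le_of_lt (div_pos (pow_pos two_pos _) h1δ)), div_eq_mul_inv,
      inv_inv]
  -- iteration step
  have step1 : ∀ n, (I (n + 1)) ^ (1 / q (n + 1)) ≤ B n ^ (1 / q n) * (I n) ^ (1 / q n) := by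
    intro n
    have := hiter (σs (n+1)) (σs n) (q n) (lt_trans hδ0 (hσδ (n+1))) (hσlt n)
      (hσle1 n) (hqpos n)
    rw [hq_succ n, hBeq n] at this
    exact this
  have hC0 : (0:ℝ) < C := lt_of_lt_of_le one_pos hC
  -- step using sigma' = delta
  set J : ℕ → ℝ := fun n => ∫ x in U δ, |f x| ^ (q n) ∂μ with hJdef
  have stepJ : ∀ n, (J (n + 1)) ^ (1 / q (n + 1)) ≤ B n ^ (1 / q n) * (I n) ^ (1 / q n) := by
    intro n
    have h := hiter δ (σs n) (q n) hδ0 (hσδ n) (hσle1 n) (hqpos n)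
    rw [hq_succ n] at h
    refine le_trans h (mul_le_mul_of_nonneg_right ?_ (Real.rpow_nonneg (hInn n) _))
    have hd : (0:ℝ) < σs n - δ := sub_pos.mpr (hσδ n)
    have hsm : (0:ℝ) < σs n - σs (n+1) := by
      rw [hσdiff n]; exact div_pos h1δ (pow_pos two_pos _)
    have hle : σs n - σs (n+1) ≤ σs n - δ := by have := hσδ (n+1); linarith
    have hrp : (σs n - σs (n+1)) ^ γ ≤ (σs n - δ) ^ γ :=
      Real.rpow_le_rpow hsm.le hle hγ.le
    have hrpos0 : (0:ℝ) < (σs n - σs (n+1)) ^ γ := Real.rpow_pos_of_pos hsm γ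
    have hnum : (0:ℝ) ≤ C * (1 + q n) ^ γ := by
      have := hqpos n
      exact mul_nonneg hC0.le (Real.rpow_nonneg (by linarith) γ)
    have hdivle : C * (1 + q n) ^ γ / (σs n - δ) ^ γ ≤
        C * (1 + q n) ^ γ / (σs n - σs (n+1)) ^ γ :=
      div_le_div_of_nonneg_left hnum hrpos0 hrp
    rw [hBeq n] at hdivle
    exact Real.rpow_le_rpow
      (div_nonneg hnum (Real.rpow_nonneg hd.le γ)) hdivle (by positivity)
  -- product of constants
  set P : ℕ → ℝ := fun n => ∏ k ∈ Finset.range n, B k ^ (1 / q k) with hPdef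
  have hB1 : ∀ n, 1 ≤ B n := by
    intro n
    have h1 : (1:ℝ) ≤ (1 + q n) ^ γ :=
      Real.one_le_rpow (by linarith [hqpos n]) hγ.le
    have h2 : (1:ℝ) ≤ ((2:ℝ) ^ (n+1) / (1 - δ)) ^ γ := by
      refine Real.one_le_rpow ?_ hγ.le
      rw [le_div_iff₀ h1δ]
      have : (1:ℝ) ≤ (2:ℝ) ^ (n+1) := one_le_pow₀ (by norm_num)
      linarith
    simp only [hBdef]
    exact aux_one_le_mul3 hC h1 h2
  have hP1 : ∀ n, 1 ≤ P n := by
    intro n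
    induction n with
    | zero => simp [hPdef]
    | succ n ih =>
      have h1 : (1:ℝ) ≤ B n ^ (1 / q n) := Real.one_le_rpow (hB1 n) (by positivity)
      have h2 : P (n+1) = P n * B n ^ (1 / q n) := by
        simp only [hPdef, Finset.prod_range_succ]
      rw [h2]
      nlinarith
  have hq0 : q 0 = p := by simp [hqdef]
  have chain : ∀ n, (I n) ^ (1 / q n) ≤ P n * (I 0) ^ (1 / p) := by
    intro n
    induction n with
    | zero => simp [hPdef, hq0]
    | succ n ih =>
      calc (I (n+1)) ^ (1 / q (n+1)) ≤ B n ^ (1 / q n) * (I n) ^ (1 / q n) := step1 n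
        _ ≤ B n ^ (1 / q n) * (P n * (I 0) ^ (1 / p)) :=
            mul_le_mul_of_nonneg_left ih (Real.rpow_nonneg (hBpos n).le _)
        _ = P (n+1) * (I 0) ^ (1 / p) := by
            simp only [hPdef, Finset.prod_range_succ]; ring
  -- bound on the product
  have hqinv : ∀ k, 1 / q k = κ⁻¹ ^ k * (1 / p) := by
    intro k
    have hk : κ ^ k ≠ 0 := (pow_pos hκ0 k).ne'
    simp only [hqdef]
    rw [inv_pow]
    field_simp
  have hPQ : ∀ n, P n = (∏ k ∈ Finset.range n, B k ^ (κ⁻¹ ^ k)) ^ (1 / p) := by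
    intro n
    rw [← Real.finset_prod_rpow _ _ (fun k _ => Real.rpow_nonneg (hBpos k).le _) _]
    refine Finset.prod_congr rfl fun k _ => ?_
    rw [hqinv k, Real.rpow_mul (hBpos k).le]
  set E : ℝ := D₀ * ((1 - δ) ^ γ)⁻¹ with hEdef
  have hD0pos : (0:ℝ) < D₀ := by
    rw [hD0def]
    exact mul_pos (mul_pos hC0 (Real.rpow_pos_of_pos (by linarith) γ))
      (Real.rpow_pos_of_pos two_pos γ)
  have hD01 : (1:ℝ) ≤ D₀ := by
    rw [hD0def]
    have h1 : (1:ℝ) ≤ (1 + pbar) ^ γ := Real.one_le_rpow (by linarith) hγ.le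
    have h2 : (1:ℝ) ≤ (2:ℝ) ^ γ := Real.one_le_rpow (by norm_num) hγ.le
    exact aux_one_le_mul3 hC h1 h2
  have hE1 : (1:ℝ) ≤ E := by
    rw [hEdef]
    have h1 : (1 - δ) ^ γ ≤ 1 := by
      calc (1 - δ) ^ γ ≤ 1 ^ γ := Real.rpow_le_rpow h1δ.le (by linarith) hγ.le
        _ = 1 := Real.one_rpow γ
    have h2 : (0:ℝ) < (1 - δ) ^ γ := Real.rpow_pos_of_pos h1δ γ
    have h3 : (1:ℝ) ≤ ((1 - δ) ^ γ)⁻¹ := one_le_inv_iff₀.mpr ⟨h2, h1⟩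
    nlinarith [mul_nonneg (sub_nonneg.mpr hD01) (sub_nonneg.mpr h3)]
  have hEpos : (0:ℝ) < E := lt_of_lt_of_le one_pos hE1
  have hr1 : (1:ℝ) ≤ r := by
    rw [hrdef]; exact Real.one_le_rpow (by linarith) hγ.le
  have hrpos : (0:ℝ) < r := lt_of_lt_of_le one_pos hr1
  have hBF : ∀ k, B k ≤ E * r ^ k := by
    intro k
    have hκk : (1:ℝ) ≤ κ ^ k := one_le_pow₀ hκ.le
    have hb : 1 + q k ≤ (1 + pbar) * κ ^ k := by
      have h1 : q k ≤ pbar * κ ^ k := by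
        simp only [hqdef]
        exact mul_le_mul_of_nonneg_right hppbar (pow_nonneg hκ0.le k)
      nlinarith
    have h1 : (1 + q k) ^ γ ≤ (1 + pbar) ^ γ * (κ ^ γ) ^ k := by
      calc (1 + q k) ^ γ ≤ ((1 + pbar) * κ ^ k) ^ γ :=
            Real.rpow_le_rpow (by linarith [hqpos k]) hb hγ.le
        _ = (1 + pbar) ^ γ * (κ ^ k) ^ γ :=
            Real.mul_rpow (by linarith) (pow_nonneg hκ0.le k)
        _ = (1 + pbar) ^ γ * (κ ^ γ) ^ k := by rw [aux_pow_rpow κ hκ0.le γ k]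
    have h2 : ((2:ℝ) ^ (k+1) / (1 - δ)) ^ γ = (2:ℝ) ^ γ * ((2:ℝ) ^ γ) ^ k * ((1 - δ) ^ γ)⁻¹ := by
      rw [Real.div_rpow (by positivity) h1δ.le, div_eq_mul_inv,
        aux_pow_rpow 2 (by norm_num) γ (k+1), pow_succ]
      ring
    have h3 : (0:ℝ) ≤ ((2:ℝ) ^ (k+1) / (1 - δ)) ^ γ := Real.rpow_nonneg (by positivity) γ
    calc B k = C * (1 + q k) ^ γ * ((2:ℝ) ^ (k+1) / (1 - δ)) ^ γ := by
          simp only [hBdef]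
      _ ≤ C * ((1 + pbar) ^ γ * (κ ^ γ) ^ k) * ((2:ℝ) ^ (k+1) / (1 - δ)) ^ γ :=
          mul_le_mul_of_nonneg_right (mul_le_mul_of_nonneg_left h1 hC0.le) h3
      _ = E * r ^ k := by
          rw [h2, hEdef, hD0def, hrdef, Real.mul_rpow (by norm_num) hκ0.le, mul_pow]
          ring
  have hκinv0 : (0:ℝ) ≤ κ⁻¹ := by positivity
  have hκinv1 : κ⁻¹ < 1 := inv_lt_one_of_one_lt₀ hκ
  have hsum1 : ∀ n, ∑ k ∈ Finset.range n, κ⁻¹ ^ k ≤ S :=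
    fun n => aux_geom_sum_le κ⁻¹ hκinv0 hκinv1 n
  have hsum2 : ∀ n, ∑ k ∈ Finset.range n, (k:ℝ) * κ⁻¹ ^ k ≤ S₂ := by
    intro n
    have hθ0 : (0:ℝ) < θ := by linarith
    have hterm : ∀ k : ℕ, (k:ℝ) * κ⁻¹ ^ k ≤ (Real.log θ)⁻¹ * (θ/κ) ^ k := by
      intro k
      have hk : (k:ℝ) * Real.log θ ≤ θ ^ k := by
        calc (k:ℝ) * Real.log θ = Real.log (θ ^ k) := by rw [Real.log_pow]
          _ ≤ θ ^ k - 1 := Real.log_le_sub_one_of_pos (pow_pos hθ0 k)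
          _ ≤ θ ^ k := by linarith
      have hkb : (k:ℝ) ≤ (Real.log θ)⁻¹ * θ ^ k := by
        rw [← div_eq_inv_mul, le_div_iff₀ hlogθ]
        exact hk
      calc (k:ℝ) * κ⁻¹ ^ k ≤ ((Real.log θ)⁻¹ * θ ^ k) * κ⁻¹ ^ k :=
            mul_le_mul_of_nonneg_right hkb (by positivity)
        _ = (Real.log θ)⁻¹ * (θ/κ) ^ k := by
            rw [mul_assoc, ← mul_pow, ← div_eq_mul_inv]
    have hθκ0 : (0:ℝ) ≤ θ / κ := by positivity
    have hθκ1 : θ / κ < 1 := by rw [div_lt_one hκ0]; exact hθκ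
    calc ∑ k ∈ Finset.range n, (k:ℝ) * κ⁻¹ ^ k
        ≤ ∑ k ∈ Finset.range n, (Real.log θ)⁻¹ * (θ/κ) ^ k :=
          Finset.sum_le_sum fun k _ => hterm k
      _ = (Real.log θ)⁻¹ * ∑ k ∈ Finset.range n, (θ/κ) ^ k := by rw [Finset.mul_sum]
      _ ≤ (Real.log θ)⁻¹ * (1 - θ/κ)⁻¹ :=
          mul_le_mul_of_nonneg_left (aux_geom_sum_le _ hθκ0 hθκ1 n) (by positivity)
      _ = S₂ := hS2def.symm
  have hQb : ∀ n, (∏ k ∈ Finset.range n, B k ^ (κ⁻¹ ^ k)) ≤ E ^ S * r ^ S₂ := by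
    intro n
    have hterm : ∀ k, B k ^ (κ⁻¹ ^ k) ≤ E ^ (κ⁻¹ ^ k) * r ^ ((k:ℝ) * κ⁻¹ ^ k) := by
      intro k
      have he : (0:ℝ) ≤ κ⁻¹ ^ k := by positivity
      calc B k ^ (κ⁻¹ ^ k) ≤ (E * r ^ k) ^ (κ⁻¹ ^ k) :=
            Real.rpow_le_rpow (hBpos k).le (hBF k) he
        _ = E ^ (κ⁻¹ ^ k) * (r ^ k) ^ (κ⁻¹ ^ k) :=
            Real.mul_rpow hEpos.le (pow_nonneg hrpos.le k)
        _ = E ^ (κ⁻¹ ^ k) * r ^ ((k:ℝ) * κ⁻¹ ^ k) := by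
            rw [← Real.rpow_natCast r k, ← Real.rpow_mul hrpos.le]
    calc (∏ k ∈ Finset.range n, B k ^ (κ⁻¹ ^ k))
        ≤ ∏ k ∈ Finset.range n, (E ^ (κ⁻¹ ^ k) * r ^ ((k:ℝ) * κ⁻¹ ^ k)) :=
          Finset.prod_le_prod (fun k _ => Real.rpow_nonneg (hBpos k).le _)
            (fun k _ => hterm k)
      _ = (∏ k ∈ Finset.range n, E ^ (κ⁻¹ ^ k)) *
            (∏ k ∈ Finset.range n, r ^ ((k:ℝ) * κ⁻¹ ^ k)) := Finset.prod_mul_distrib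
      _ = E ^ (∑ k ∈ Finset.range n, κ⁻¹ ^ k) *
            r ^ (∑ k ∈ Finset.range n, (k:ℝ) * κ⁻¹ ^ k) := by
          rw [aux_prod_rpow E hEpos, aux_prod_rpow r hrpos]
      _ ≤ E ^ S * r ^ S₂ :=
          mul_le_mul (Real.rpow_le_rpow_of_exponent_le hE1 (hsum1 n))
            (Real.rpow_le_rpow_of_exponent_le hr1 (hsum2 n))
            (Real.rpow_nonneg hrpos.le _) (Real.rpow_nonneg hEpos.le _)
  have hESr : E ^ S * r ^ S₂ = (D₀ ^ S * r ^ S₂) / (1 - δ) ^ (γ * S) := by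
    have h2 : (0:ℝ) ≤ (1 - δ) ^ γ := Real.rpow_nonneg h1δ.le γ
    rw [hEdef, Real.mul_rpow hD0pos.le (inv_nonneg.mpr h2), Real.inv_rpow h2,
      ← Real.rpow_mul h1δ.le, div_eq_mul_inv]
    ring
  have hPb : ∀ n, P n ≤ ((D₀ ^ S * r ^ S₂) / (1 - δ) ^ (γ * S)) ^ (1 / p) := by
    intro n
    rw [hPQ n]
    refine Real.rpow_le_rpow
      (Finset.prod_nonneg fun k _ => Real.rpow_nonneg (hBpos k).le _) ?_ (by positivity)
    rw [← hESr]
    exact hQb n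
  -- final assembly
  have hI0 : I 0 = ∫ x in U (1:ℝ), |f x| ^ p ∂μ := by
    simp only [hIdef, hσ0, hq0]
  set K : ℝ := ((D₀ ^ S * r ^ S₂) / (1 - δ) ^ (γ * S)) ^ (1 / p) with hKdef
  have hKnn : 0 ≤ K := Real.rpow_nonneg (by positivity) _
  set D : ℝ := K * (I 0) ^ (1 / p) with hDdef
  have hDnn : 0 ≤ D := mul_nonneg hKnn (Real.rpow_nonneg (hInn 0) _)
  have hgoalD : (((D₀ ^ S * r ^ S₂) / (1 - δ) ^ (γ * S)) ^ (1 / p)) *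
      (∫ x in U (1:ℝ), |f x| ^ p ∂μ) ^ (1 / p) = D := by
    rw [hDdef, hKdef, hI0]
  rw [hgoalD]
  -- essSup analysis
  set ν := μ.restrict (U δ) with hνdef
  set T : Set ℝ := {a | ∀ᵐ x ∂ν, |f x| ≤ a} with hTdef
  have hess : essSup (fun x => |f x|) ν = sInf T := by
    rw [show essSup (fun x => |f x|) ν = Filter.limsup (fun x => |f x|) (ae ν) from rfl,
      Filter.limsup_eq]
  rw [hess]
  rcases eq_or_ne ν 0 with hν | hν
  · have hTuniv : T = Set.univ := by
      ext a
      simp [hTdef, hν]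
    rw [hTuniv, csInf_of_not_bddBelow not_bddBelow_univ, Real.sInf_empty]
    exact hDnn
  rcases Set.eq_empty_or_nonempty T with hT | hTne
  · rw [hT, Real.sInf_empty]
    exact hDnn
  have hae : (ae ν).NeBot := ae_neBot.mpr hν
  haveI := hae
  have hTbdd : BddBelow T := by
    refine ⟨0, fun a ha => ?_⟩
    have ha' : ∀ᵐ x ∂ν, |f x| ≤ a := ha
    obtain ⟨x, hx⟩ := ha'.exists
    exact le_trans (abs_nonneg _) hx
  obtain ⟨a₀, ha₀⟩ := hTne
  have hint : ∀ s : ℝ, 0 < s → Integrable (fun x => |f x| ^ s) ν := by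
    intro s hs
    have hmeas : Measurable fun x : X => |f x| ^ s :=
      (Real.continuous_rpow_const hs.le).measurable.comp hf.abs
    refine Integrable.mono' (integrable_const (|a₀| ^ s)) hmeas.aestronglyMeasurable ?_
    filter_upwards [ha₀] with x hx
    rw [Real.norm_eq_abs, abs_of_nonneg (Real.rpow_nonneg (abs_nonneg _) s)]
    exact Real.rpow_le_rpow (abs_nonneg _) (le_trans hx (le_abs_self a₀)) hs.le
  refine le_of_forall_pos_le_add ?_
  intro ε hε
  refine csInf_le hTbdd ?_
  by_contra hmem
  set t : ℝ := D + ε with htdef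
  have ht : 0 < t := by rw [htdef]; linarith
  have hm : ν {x | t < |f x|} ≠ 0 := by
    intro h0
    apply hmem
    show ∀ᵐ x ∂ν, |f x| ≤ t
    rw [ae_iff]
    convert h0 using 2
    ext x
    simp [not_le]
  set m : ℝ := (ν {x | t < |f x|}).toReal with hmdef
  have hmfin : ν {x | t < |f x|} ≠ ⊤ := measure_ne_top ν _
  have hm0 : 0 < m := ENNReal.toReal_pos hm hmfin
  have hkey : ∀ n : ℕ, t * m ^ (1 / q (n+1)) ≤ D := by
    intro n
    have hq1 := hqpos (n+1)
    have hsmeas : MeasurableSet {x | t < |f x|} :=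
      measurableSet_lt measurable_const hf.abs
    have h1 : t ^ (q (n+1)) * m ≤ ∫ x in {x | t < |f x|}, |f x| ^ (q (n+1)) ∂ν :=
      by
        have := setIntegral_ge_of_const_le hsmeas hmfin
          (fun x hx => Real.rpow_le_rpow ht.le (le_of_lt hx) hq1.le)
          ((hint _ hq1).integrableOn)
        rw [smul_eq_mul, mul_comm] at this
        exact this
    have h2 : ∫ x in {x | t < |f x|}, |f x| ^ (q (n+1)) ∂ν ≤ J (n+1) :=
      setIntegral_le_integral (hint _ hq1)
        (Filter.Eventually.of_forall fun x => Real.rpow_nonneg (abs_nonneg _) _)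
    have h3 : (t ^ (q (n+1)) * m) ^ (1 / q (n+1)) ≤ (J (n+1)) ^ (1 / q (n+1)) :=
      Real.rpow_le_rpow (mul_nonneg (Real.rpow_nonneg ht.le _) hm0.le)
        (le_trans h1 h2) (by positivity)
    have h4 : (t ^ (q (n+1)) * m) ^ (1 / q (n+1)) = t * m ^ (1 / q (n+1)) := by
      rw [Real.mul_rpow (Real.rpow_nonneg ht.le _) hm0.le, ← Real.rpow_mul ht.le,
        mul_one_div_cancel hq1.ne', Real.rpow_one]
    calc t * m ^ (1 / q (n+1)) = (t ^ (q (n+1)) * m) ^ (1 / q (n+1)) := h4.symm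
      _ ≤ (J (n+1)) ^ (1 / q (n+1)) := h3
      _ ≤ B n ^ (1 / q n) * (I n) ^ (1 / q n) := stepJ n
      _ ≤ B n ^ (1 / q n) * (P n * (I 0) ^ (1 / p)) :=
          mul_le_mul_of_nonneg_left (chain n) (Real.rpow_nonneg (hBpos n).le _)
      _ = P (n+1) * (I 0) ^ (1 / p) := by
          simp only [hPdef, Finset.prod_range_succ]; ring
      _ ≤ K * (I 0) ^ (1 / p) :=
          mul_le_mul_of_nonneg_right (hPb (n+1)) (Real.rpow_nonneg (hInn 0) _)
      _ = D := hDdef.symm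
  have hlim1 : Filter.Tendsto (fun n : ℕ => 1 / q (n+1)) Filter.atTop (nhds 0) := by
    have h2 : Filter.Tendsto (fun n : ℕ => κ⁻¹ ^ (n+1)) Filter.atTop (nhds 0) :=
      (tendsto_pow_atTop_nhds_zero_of_lt_one hκinv0 hκinv1).comp
        (Filter.tendsto_add_atTop_nat 1)
    have h3 := h2.mul_const (1 / p)
    rw [zero_mul] at h3
    refine h3.congr fun n => ?_
    exact (hqinv (n+1)).symm
  have hlim2 : Filter.Tendsto (fun n : ℕ => t * m ^ (1 / q (n+1))) Filter.atTop (nhds t) := by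
    have h2 : Filter.Tendsto (fun n : ℕ => m ^ (1 / q (n+1))) Filter.atTop (nhds 1) := by
      have h3 := (Real.continuousAt_const_rpow (a := m) (b := 0) hm0.ne').tendsto.comp hlim1
      rw [Real.rpow_zero] at h3
      exact h3
    have h4 := h2.const_mul t
    rw [mul_one] at h4
    exact h4
  have htD : t ≤ D := le_of_tendsto hlim2 (Filter.Eventually.of_forall hkey)
  rw [htdef] at htD
  linarith
end

section
/- Assume μ(U₁) ≤ 1. Let κ>1, 0<p₀<κ, C≥1 and γ>0. Suppose f is a μ-measurable function on U₁ such that |f|_{L_{βκ}(U_{σ'})} ≤ (C/(σ−σ')^γ)^{1/β} · |f|_{L_β(U_σ)} for all 0<σ'<σ≤1 and all β with 0<β≤p₀/κ (note p₀/κ<1). Then there exist a constant M depending only on C, γ, κ and a constant γ₀ depending only on γ and κ such that for all δ∈(0,1) and all p∈(0,p₀/κ] one has |f|_{L_{p₀}(U_δ)} ≤ (M/(1−δ)^{γ₀})^{1/p−1/p₀} · |f|_{L_p(U₁)}. -/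
open MeasureTheory
open scoped ENNReal NNReal

section helpers
lemma aux_rpow_sum (x : ℝ) (hx : 0 < x) (s : Finset ℕ) (e : ℕ → ℝ) :
    x ^ (∑ i ∈ s, e i) = ∏ i ∈ s, x ^ e i := by
  induction s using Finset.cons_induction with
  | empty => simp
  | cons a s ha ih => rw [Finset.sum_cons, Finset.prod_cons, Real.rpow_add hx, ih]
lemma aux_mono {X : Type} [MeasurableSpace X] (ν : Measure X) (hν : ν Set.univ ≤ 1)
    (f : X → ℝ) (hf : Measurable f) {q r : ℝ} (hq : 0 < q) (hqr : q ≤ r)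
    (hint : Integrable (fun x => |f x| ^ r) ν) :
    (∫ x, |f x| ^ q ∂ν) ^ (1/q) ≤ (∫ x, |f x| ^ r ∂ν) ^ (1/r) := by
  have hr : 0 < r := lt_of_lt_of_le hq hqr
  have hms : ∀ s : ℝ, Measurable fun x => |f x| ^ s := fun s =>
    (hf.abs).pow measurable_const
  have key : ∀ s : ℝ, 0 < s →
      ∫ x, |f x| ^ s ∂ν = (∫⁻ x, (‖f x‖₊ : ℝ≥0∞) ^ s ∂ν).toReal := by
    intro s hs
    rw [integral_eq_lintegral_of_nonneg_ae
      (Filter.Eventually.of_forall fun x => Real.rpow_nonneg (abs_nonneg _) s)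
      (hms s).aestronglyMeasurable]
    congr 1
    apply lintegral_congr
    intro x
    rw [← ENNReal.ofReal_rpow_of_nonneg (abs_nonneg _) hs.le,
      ← Real.norm_eq_abs, ofReal_norm, enorm_eq_nnnorm]
  have hle : eLpNorm' f q ν ≤ eLpNorm' f r ν :=
    calc eLpNorm' f q ν ≤ eLpNorm' f r ν * ν Set.univ ^ (1/q - 1/r) :=
          eLpNorm'_le_eLpNorm'_mul_rpow_measure_univ hq hqr hf.aestronglyMeasurable
    _ ≤ eLpNorm' f r ν * 1 := by
          gcongr
          exact ENNReal.rpow_le_one hν (by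
            have := one_div_le_one_div_of_le hq hqr
            linarith)
    _ = eLpNorm' f r ν := mul_one _
  have hfin : (∫⁻ x, (‖f x‖₊ : ℝ≥0∞) ^ r ∂ν) < ⊤ := by
    have h2 := hint.hasFiniteIntegral
    rw [hasFiniteIntegral_iff_norm] at h2
    calc (∫⁻ x, (‖f x‖₊ : ℝ≥0∞) ^ r ∂ν)
        = ∫⁻ x, ENNReal.ofReal ‖|f x| ^ r‖ ∂ν := by
          apply lintegral_congr; intro x
          rw [Real.norm_eq_abs, abs_of_nonneg (Real.rpow_nonneg (abs_nonneg _) r),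
            ← ENNReal.ofReal_rpow_of_nonneg (abs_nonneg _) hr.le,
            ← Real.norm_eq_abs, ofReal_norm, enorm_eq_nnnorm]
    _ < ⊤ := h2
  have hfin' : eLpNorm' f r ν ≠ ⊤ := by
    rw [eLpNorm']
    exact (ENNReal.rpow_lt_top_of_nonneg (by positivity) hfin.ne).ne
  rw [key q hq, key r hr, ENNReal.toReal_rpow, ENNReal.toReal_rpow]
  exact ENNReal.toReal_mono hfin' hle

lemma aux_sum1 {κ : ℝ} (hκ : 1 < κ) : ∀ n : ℕ,
    (∑ i ∈ Finset.Icc 1 n, κ ^ i) ≤ κ ^ (n+1) / (κ - 1) := by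
  have hκ1 : 0 < κ - 1 := by linarith
  have hκ0 : (0:ℝ) < κ := by linarith
  intro n
  induction n with
  | zero => simp; positivity
  | succ n ih =>
    rw [Finset.sum_Icc_succ_top (by omega : 1 ≤ n+1)]
    have he : κ ^ (n+1) / (κ-1) + κ ^ (n+1) = κ ^ (n+2) / (κ-1) := by
      field_simp; ring
    linarith [ih]

lemma aux_sum2 {κ : ℝ} (hκ : 1 < κ) : ∀ n : ℕ,
    (∑ i ∈ Finset.Icc 1 n, ((n:ℝ) + 1 - (i:ℝ)) * κ ^ i) ≤ κ ^ (n+2) / (κ - 1)^2 := by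
  have hκ1 : 0 < κ - 1 := by linarith
  have hκ0 : (0:ℝ) < κ := by linarith
  intro n
  induction n with
  | zero => simp; positivity
  | succ n ih =>
    have hsplit : (∑ i ∈ Finset.Icc 1 (n+1), (((n:ℝ)+1) + 1 - (i:ℝ)) * κ ^ i)
        = (∑ i ∈ Finset.Icc 1 (n+1), ((n:ℝ) + 1 - (i:ℝ)) * κ ^ i)
          + (∑ i ∈ Finset.Icc 1 (n+1), κ ^ i) := by
      rw [← Finset.sum_add_distrib]
      apply Finset.sum_congr rfl
      intro i _
      ring
    have h1 : (∑ i ∈ Finset.Icc 1 (n+1), ((n:ℝ) + 1 - (i:ℝ)) * κ ^ i)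
        = (∑ i ∈ Finset.Icc 1 n, ((n:ℝ) + 1 - (i:ℝ)) * κ ^ i) := by
      rw [Finset.sum_Icc_succ_top (by omega : 1 ≤ n+1)]
      push_cast
      simp
    have h2 := aux_sum1 hκ (n+1)
    have he : κ ^ (n+2) / (κ-1)^2 + κ ^ (n+2) / (κ-1) = κ ^ (n+3) / (κ-1)^2 := by
      field_simp; ring
    push_cast at hsplit ⊢
    rw [hsplit, h1]
    push_cast at ih h2 he ⊢
    linarith

end helpers

set_option maxHeartbeats 2000000

/-- Moser iteration, second form: from the iteration inequality for small
exponents one obtains an `L_{p₀}` bound on `U δ` in terms of the `L_p` norm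
on `U 1`, provided `μ(U 1) ≤ 1`. -/
theorem moser_iteration_Lp (κ p₀ C γ : ℝ) (hκ : 1 < κ) (hp₀ : 0 < p₀)
    (hp₀κ : p₀ < κ) (hC : 1 ≤ C) (hγ : 0 < γ) :
    ∃ M γ₀ : ℝ,
      ∀ (X : Type) (_ : MeasurableSpace X) (μ : Measure X), IsFiniteMeasure μ →
      ∀ U : ℝ → Set X,
        (∀ σ' σ : ℝ, 0 < σ' → σ' ≤ σ → σ ≤ 1 → U σ' ⊆ U σ) →
      μ (U 1) ≤ 1 →
      ∀ f : X → ℝ, Measurable f →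
        (∀ σ' σ β : ℝ, 0 < σ' → σ' < σ → σ ≤ 1 → 0 < β → β ≤ p₀ / κ →
          (∫ x in U σ', |f x| ^ (β * κ) ∂μ) ^ (1 / (β * κ)) ≤
            (C / (σ - σ') ^ γ) ^ (1 / β) *
              (∫ x in U σ, |f x| ^ β ∂μ) ^ (1 / β)) →
      ∀ δ ∈ Set.Ioo (0:ℝ) 1, ∀ p ∈ Set.Ioc (0:ℝ) (p₀ / κ),
        (∫ x in U δ, |f x| ^ p₀ ∂μ) ^ (1 / p₀) ≤
          (M / (1 - δ) ^ γ₀) ^ (1 / p - 1 / p₀) *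
            (∫ x in U (1:ℝ), |f x| ^ p ∂μ) ^ (1 / p) := by
  have hκ0' : (0:ℝ) < κ := by linarith
  have hκ1' : (0:ℝ) < κ - 1 := by linarith
  refine ⟨C ^ (κ^3/(κ-1)^2) * 2 ^ (γ * (κ^4/(κ-1)^3)), γ * (κ^3/(κ-1)^2), ?_⟩
  intro X mX μ hfinμ U hU hμ1 f hf hmain δ hδ p hp
  have hκ0 : (0:ℝ) < κ := by linarith
  have hκ1 : (0:ℝ) < κ - 1 := by linarith
  have hC0 : (0:ℝ) < C := by linarith
  obtain ⟨hδ0, hδ1⟩ := hδ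
  obtain ⟨hp0, hpκ⟩ := hp
  have h1δ : (0:ℝ) < 1 - δ := by linarith
  set A : ℝ := C / (1-δ)^γ with hA
  set B : ℝ := (2:ℝ)^γ with hB
  have hA0 : 0 < A := by positivity
  have hB0 : 0 < B := by positivity
  have hA1 : 1 ≤ A := by
    rw [hA, le_div_iff₀ (by positivity)]
    have : (1-δ)^γ ≤ 1 := Real.rpow_le_one h1δ.le (by linarith) hγ.le
    linarith
  have hB1 : 1 ≤ B := Real.one_le_rpow (by norm_num) hγ.le
  have hκpow : ∀ j : ℕ, (0:ℝ) < κ ^ j := fun j => pow_pos hκ0 j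
  have coef_eq : ∀ t : ℝ, C / ((1-δ) * (2:ℝ)^t)^γ = A * B^(-t) := by
    intro t
    have h2t : (0:ℝ) < (2:ℝ)^t := Real.rpow_pos_of_pos two_pos t
    rw [Real.mul_rpow h1δ.le h2t.le, ← Real.rpow_mul (by norm_num : (0:ℝ) ≤ 2),
      hB, ← Real.rpow_mul (by norm_num : (0:ℝ) ≤ 2), hA]
    rw [show γ * -t = -(t*γ) from by ring, Real.rpow_neg (by norm_num : (0:ℝ) ≤ 2)]
    field_simp
  have intnn : ∀ (r : ℝ) (s : ℝ), 0 ≤ ∫ x in U s, |f x| ^ r ∂μ := fun r s =>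
    integral_nonneg fun x => Real.rpow_nonneg (abs_nonneg _) r
  have hsle1 : ∀ (ℓ j : ℕ), j ≤ ℓ → δ + (1-δ) * (2:ℝ)^((j:ℝ)-(ℓ:ℝ)) ≤ 1 := by
    intro ℓ j hjℓ
    have h2 : (2:ℝ)^((j:ℝ)-(ℓ:ℝ)) ≤ 1 :=
      Real.rpow_le_one_of_one_le_of_nonpos (by norm_num)
        (by have : (j:ℝ) ≤ (ℓ:ℝ) := Nat.cast_le.mpr hjℓ; linarith)
    nlinarith [Real.rpow_pos_of_pos (by norm_num : (0:ℝ)<2) ((j:ℝ)-(ℓ:ℝ))]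
  have hspos : ∀ (ℓ j : ℕ), 0 < δ + (1-δ)*(2:ℝ)^((j:ℝ)-(ℓ:ℝ)) := by
    intro ℓ j
    nlinarith [Real.rpow_pos_of_pos (by norm_num : (0:ℝ)<2) ((j:ℝ)-(ℓ:ℝ))]
  have hβle : ∀ j : ℕ, 1 ≤ j → p₀ / κ ^ j ≤ p₀ / κ := by
    intro j hj
    rw [div_le_div_iff₀ (hκpow j) hκ0]
    have h1 : κ ^ 1 ≤ κ ^ j := pow_le_pow_right₀ (le_of_lt hκ) hj
    rw [pow_one] at h1
    nlinarith
  have chain : ∀ ℓ : ℕ, 1 ≤ ℓ → ∀ j : ℕ, 1 ≤ j → j ≤ ℓ →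
      (∫ x in U δ, |f x| ^ p₀ ∂μ) ^ (1/p₀) ≤
        (∏ i ∈ Finset.Icc 1 j, (A * B ^ ((ℓ:ℝ)+1-(i:ℝ))) ^ (κ ^ i / p₀)) *
        (∫ x in U (δ + (1-δ) * (2:ℝ) ^ ((j:ℝ)-(ℓ:ℝ))), |f x| ^ (p₀ / κ ^ j) ∂μ)
          ^ (κ ^ j / p₀) := by
    intro ℓ hℓ j hj
    induction j, hj using Nat.le_induction with
    | base =>
      intro h1ℓ
      have hβ : (0:ℝ) < p₀ / κ := by positivity
      have hσlt : δ < δ + (1-δ)*(2:ℝ)^((1:ℝ)-(ℓ:ℝ)) := by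
        nlinarith [Real.rpow_pos_of_pos (by norm_num : (0:ℝ)<2) ((1:ℝ)-(ℓ:ℝ))]
      have h := hmain δ (δ + (1-δ)*(2:ℝ)^((1:ℝ)-(ℓ:ℝ))) (p₀/κ) hδ0 hσlt
        (by have := hsle1 ℓ 1 h1ℓ; simpa using this) hβ le_rfl
      rw [div_mul_cancel₀ p₀ (ne_of_gt hκ0)] at h
      simp only [one_div_div] at h
      have hc1 : (C / ((δ + (1-δ)*(2:ℝ)^((1:ℝ)-(ℓ:ℝ))) - δ)^γ) ^ (κ/p₀)
          ≤ (A * B ^ ((ℓ:ℝ)+1-1)) ^ (κ/p₀) := by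
        have he : (δ + (1-δ)*(2:ℝ)^((1:ℝ)-(ℓ:ℝ))) - δ = (1-δ)*(2:ℝ)^((1:ℝ)-(ℓ:ℝ)) := by ring
        rw [he, coef_eq]
        apply Real.rpow_le_rpow (mul_nonneg hA0.le (Real.rpow_nonneg hB0.le _)) _ (by positivity)
        have hBe : B ^ (-((1:ℝ)-(ℓ:ℝ))) ≤ B ^ ((ℓ:ℝ)+1-1) := by
          apply Real.rpow_le_rpow_of_exponent_le hB1
          linarith
        nlinarith [Real.rpow_pos_of_pos hB0 (-((1:ℝ)-(ℓ:ℝ))), hA0]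
      simp only [Finset.Icc_self, Finset.prod_singleton, pow_one, Nat.cast_one]
      exact le_trans h (mul_le_mul_of_nonneg_right hc1 (Real.rpow_nonneg (intnn _ _) _))
    | succ j hj ih =>
      intro hj1ℓ
      have hjℓ : j ≤ ℓ := by omega
      have IH := ih hjℓ
      have hβpos : (0:ℝ) < p₀ / κ^(j+1) := by positivity
      have hslt : δ + (1-δ)*(2:ℝ)^((j:ℝ)-(ℓ:ℝ)) < δ + (1-δ)*(2:ℝ)^(((j+1:ℕ):ℝ)-(ℓ:ℝ)) := by
        have := Real.rpow_lt_rpow_of_exponent_lt (by norm_num : (1:ℝ) < 2)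
          (show (j:ℝ)-(ℓ:ℝ) < ((j+1:ℕ):ℝ)-(ℓ:ℝ) from by push_cast; linarith)
        nlinarith
      have h := hmain (δ + (1-δ)*(2:ℝ)^((j:ℝ)-(ℓ:ℝ)))
        (δ + (1-δ)*(2:ℝ)^(((j+1:ℕ):ℝ)-(ℓ:ℝ))) (p₀/κ^(j+1)) (hspos ℓ j) hslt
        (hsle1 ℓ (j+1) hj1ℓ) hβpos (hβle (j+1) (by omega))
      have e1 : p₀/κ^(j+1)*κ = p₀/κ^j := by
        rw [pow_succ]; field_simp
      have e2 : 1/(p₀/κ^j) = κ^j/p₀ := one_div_div _ _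
      have e3 : 1/(p₀/κ^(j+1)) = κ^(j+1)/p₀ := one_div_div _ _
      rw [e1, e2, e3] at h
      have egap : (δ + (1-δ)*(2:ℝ)^(((j+1:ℕ):ℝ)-(ℓ:ℝ))) - (δ + (1-δ)*(2:ℝ)^((j:ℝ)-(ℓ:ℝ)))
          = (1-δ) * (2:ℝ)^((j:ℝ)-(ℓ:ℝ)) := by
        have h2 : (2:ℝ)^(((j+1:ℕ):ℝ)-(ℓ:ℝ)) = (2:ℝ)^((j:ℝ)-(ℓ:ℝ)) * 2 := by
          rw [show ((j+1:ℕ):ℝ)-(ℓ:ℝ) = ((j:ℝ)-(ℓ:ℝ)) + 1 from by push_cast; ring,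
            Real.rpow_add two_pos, Real.rpow_one]
        rw [h2]; ring
      have ecoef : C / ((δ + (1-δ)*(2:ℝ)^(((j+1:ℕ):ℝ)-(ℓ:ℝ))) - (δ + (1-δ)*(2:ℝ)^((j:ℝ)-(ℓ:ℝ))))^γ
          = A * B^((ℓ:ℝ)+1-((j+1:ℕ):ℝ)) := by
        rw [egap, coef_eq]
        congr 1
        push_cast; ring
      rw [ecoef] at h
      have hQnn : 0 ≤ ∏ i ∈ Finset.Icc 1 j, (A * B ^ ((ℓ:ℝ)+1-(i:ℝ))) ^ (κ ^ i / p₀) :=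
        Finset.prod_nonneg fun i _ => Real.rpow_nonneg (by positivity) _
      calc (∫ x in U δ, |f x| ^ p₀ ∂μ) ^ (1/p₀)
          ≤ (∏ i ∈ Finset.Icc 1 j, (A * B ^ ((ℓ:ℝ)+1-(i:ℝ))) ^ (κ ^ i / p₀)) *
            (∫ x in U (δ + (1-δ) * (2:ℝ) ^ ((j:ℝ)-(ℓ:ℝ))), |f x| ^ (p₀ / κ ^ j) ∂μ)
              ^ (κ ^ j / p₀) := IH
        _ ≤ (∏ i ∈ Finset.Icc 1 j, (A * B ^ ((ℓ:ℝ)+1-(i:ℝ))) ^ (κ ^ i / p₀)) *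
            ((A * B^((ℓ:ℝ)+1-((j+1:ℕ):ℝ))) ^ (κ^(j+1)/p₀) *
              (∫ x in U (δ + (1-δ)*(2:ℝ)^(((j+1:ℕ):ℝ)-(ℓ:ℝ))), |f x| ^ (p₀/κ^(j+1)) ∂μ)
                ^ (κ^(j+1)/p₀)) := mul_le_mul_of_nonneg_left h hQnn
        _ = (∏ i ∈ Finset.Icc 1 (j+1), (A * B ^ ((ℓ:ℝ)+1-(i:ℝ))) ^ (κ ^ i / p₀)) *
            (∫ x in U (δ + (1-δ) * (2:ℝ) ^ (((j+1:ℕ):ℝ)-(ℓ:ℝ))), |f x| ^ (p₀ / κ ^ (j+1)) ∂μ)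
              ^ (κ ^ (j+1) / p₀) := by
            rw [Finset.prod_Icc_succ_top (by omega : 1 ≤ j+1)]
            ring
  -- choose m
  have hpκ' : p * κ ≤ p₀ := (le_div_iff₀ hκ0).mp hpκ
  have hPex : ∃ n : ℕ, p₀ < p * κ ^ (n+1) := by
    obtain ⟨n₀, hn₀⟩ := pow_unbounded_of_one_lt (p₀ / p) hκ
    refine ⟨n₀, ?_⟩
    have h1 : p₀ / p < κ ^ n₀ := hn₀
    have h2 : (κ:ℝ) ^ n₀ ≤ κ ^ (n₀+1) := pow_le_pow_right₀ hκ.le (by omega)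
    have := (div_lt_iff₀ hp0).mp h1
    nlinarith
  set m := Nat.find hPex with hmdef
  have hm1 : p₀ < p * κ ^ (m+1) := Nat.find_spec hPex
  have hm2 : 1 ≤ m := by
    by_contra hcon
    have hm0 : m = 0 := by omega
    rw [hm0, pow_one] at hm1
    linarith
  have hm3 : p * κ ^ m ≤ p₀ := by
    have h := Nat.find_min hPex (m := m - 1) (by omega)
    push_neg at h
    have he : m - 1 + 1 = m := by omega
    rwa [he] at h
  set W := 1/p - 1/p₀ with hWdef
  by_cases hint : Integrable (fun x => |f x| ^ p) (μ.restrict (U 1))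
  · -- good case
    have final := chain (m+1) (by omega) (m+1) (by omega) le_rfl
    rw [show δ + (1-δ)*(2:ℝ)^(((m+1:ℕ):ℝ)-((m+1:ℕ):ℝ)) = 1 from by
      rw [sub_self, Real.rpow_zero]; ring] at final
    have hq0 : (0:ℝ) < p₀/κ^(m+1) := by positivity
    have hqp : p₀/κ^(m+1) ≤ p := by
      rw [div_le_iff₀ (hκpow (m+1))]
      nlinarith [hm1]
    have hmono := aux_mono (μ.restrict (U 1))
      (by rw [Measure.restrict_apply_univ]; exact hμ1) f hf hq0 hqp hint
    rw [show κ^(m+1)/p₀ = 1/(p₀/κ^(m+1)) from (one_div_div _ _).symm] at final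
    have hQnn : 0 ≤ ∏ i ∈ Finset.Icc 1 (m+1),
        (A * B ^ (((m+1:ℕ):ℝ)+1-(i:ℝ))) ^ (κ ^ i / p₀) :=
      Finset.prod_nonneg fun i _ => Real.rpow_nonneg (by positivity) _
    have trans1 := le_trans final (mul_le_mul_of_nonneg_left hmono hQnn)
    have hWlb : (κ-1)/(κ*p) ≤ W := by
      have h1 : 1/p₀ ≤ 1/(p*κ) := one_div_le_one_div_of_le (by positivity) hpκ'
      have h2 : (κ-1)/(κ*p) = 1/p - 1/(p*κ) := by
        rw [div_sub_div _ _ (ne_of_gt hp0) (ne_of_gt (by positivity : (0:ℝ) < p*κ)),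
          div_eq_div_iff (by positivity) (by positivity)]
        ring
      rw [hWdef, h2]; linarith
    have hW0 : 0 < W := lt_of_lt_of_le (by positivity) hWlb
    have hprod : (∏ i ∈ Finset.Icc 1 (m+1), (A * B ^ (((m+1:ℕ):ℝ)+1-(i:ℝ))) ^ (κ ^ i / p₀))
        = A ^ ((∑ i ∈ Finset.Icc 1 (m+1), κ ^ i)/p₀)
          * B ^ ((∑ i ∈ Finset.Icc 1 (m+1), (((m+1:ℕ):ℝ)+1-(i:ℝ)) * κ ^ i)/p₀) := by
      rw [Finset.sum_div, Finset.sum_div, aux_rpow_sum A hA0, aux_rpow_sum B hB0,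
        ← Finset.prod_mul_distrib]
      apply Finset.prod_congr rfl
      intro i _
      rw [Real.mul_rpow hA0.le (Real.rpow_nonneg hB0.le _), ← Real.rpow_mul hB0.le]
      congr 1
      ring
    have hS1 : (∑ i ∈ Finset.Icc 1 (m+1), κ ^ i)/p₀ ≤ (κ^3/(κ-1)^2) * W := by
      have h1 := aux_sum1 hκ (m+1)
      have t1 : κ^((m+1)+1)/(κ-1) = (κ^3/(κ-1)^2) * ((κ-1)/(κ*p)) * (p*κ^m) := by
        field_simp; ring
      have hc : (0:ℝ) < κ^3/(κ-1)^2 := by positivity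
      have t2 := mul_le_mul (mul_le_mul_of_nonneg_left hWlb hc.le) hm3
        (by positivity) (mul_nonneg hc.le hW0.le)
      rw [div_le_iff₀ hp₀]
      calc (∑ i ∈ Finset.Icc 1 (m+1), κ ^ i) ≤ κ^((m+1)+1)/(κ-1) := h1
        _ = (κ^3/(κ-1)^2) * ((κ-1)/(κ*p)) * (p*κ^m) := t1
        _ ≤ (κ^3/(κ-1)^2) * W * p₀ := t2
    have hS2 : (∑ i ∈ Finset.Icc 1 (m+1), (((m+1:ℕ):ℝ)+1-(i:ℝ)) * κ ^ i)/p₀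
        ≤ (κ^4/(κ-1)^3) * W := by
      have h1 := aux_sum2 hκ (m+1)
      have t1 : κ^((m+1)+2)/(κ-1)^2 = (κ^4/(κ-1)^3) * ((κ-1)/(κ*p)) * (p*κ^m) := by
        field_simp; ring
      have hc : (0:ℝ) < κ^4/(κ-1)^3 := by positivity
      have t2 := mul_le_mul (mul_le_mul_of_nonneg_left hWlb hc.le) hm3
        (by positivity) (mul_nonneg hc.le hW0.le)
      rw [div_le_iff₀ hp₀]
      calc (∑ i ∈ Finset.Icc 1 (m+1), (((m+1:ℕ):ℝ)+1-(i:ℝ)) * κ ^ i)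
          ≤ κ^((m+1)+2)/(κ-1)^2 := h1
        _ = (κ^4/(κ-1)^3) * ((κ-1)/(κ*p)) * (p*κ^m) := t1
        _ ≤ (κ^4/(κ-1)^3) * W * p₀ := t2
    have hQle : (∏ i ∈ Finset.Icc 1 (m+1), (A * B ^ (((m+1:ℕ):ℝ)+1-(i:ℝ))) ^ (κ ^ i / p₀))
        ≤ (C ^ (κ^3/(κ-1)^2) * 2 ^ (γ * (κ^4/(κ-1)^3)) / (1 - δ) ^ (γ * (κ^3/(κ-1)^2))) ^ W := by
      rw [hprod]
      have step : A ^ ((∑ i ∈ Finset.Icc 1 (m+1), κ ^ i)/p₀)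
            * B ^ ((∑ i ∈ Finset.Icc 1 (m+1), (((m+1:ℕ):ℝ)+1-(i:ℝ)) * κ ^ i)/p₀)
          ≤ A ^ ((κ^3/(κ-1)^2)*W) * B ^ ((κ^4/(κ-1)^3)*W) :=
        mul_le_mul (Real.rpow_le_rpow_of_exponent_le hA1 hS1)
          (Real.rpow_le_rpow_of_exponent_le hB1 hS2)
          (Real.rpow_nonneg hB0.le _) (Real.rpow_nonneg hA0.le _)
      refine le_trans step (le_of_eq ?_)
      rw [hA, hB]
      have eL1 : (C/(1-δ)^γ) ^ ((κ^3/(κ-1)^2)*W)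
          = C ^ ((κ^3/(κ-1)^2)*W) / (1-δ) ^ (γ*(κ^3/(κ-1)^2)*W) := by
        rw [Real.div_rpow hC0.le (Real.rpow_nonneg h1δ.le _), ← Real.rpow_mul h1δ.le]
        rw [show γ*((κ^3/(κ-1)^2)*W) = γ*(κ^3/(κ-1)^2)*W from by ring]
      have eL2 : ((2:ℝ)^γ) ^ ((κ^4/(κ-1)^3)*W) = (2:ℝ) ^ (γ*(κ^4/(κ-1)^3)*W) := by
        rw [← Real.rpow_mul (by norm_num : (0:ℝ) ≤ 2)]
        rw [show γ*((κ^4/(κ-1)^3)*W) = γ*(κ^4/(κ-1)^3)*W from by ring]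
      have eR : (C ^ (κ^3/(κ-1)^2) * 2 ^ (γ * (κ^4/(κ-1)^3)) / (1 - δ) ^ (γ * (κ^3/(κ-1)^2))) ^ W
          = C ^ ((κ^3/(κ-1)^2)*W) * (2:ℝ) ^ (γ*(κ^4/(κ-1)^3)*W) / (1-δ) ^ (γ*(κ^3/(κ-1)^2)*W) := by
        rw [Real.div_rpow (by positivity) (Real.rpow_nonneg h1δ.le _),
          Real.mul_rpow (Real.rpow_nonneg hC0.le _) (Real.rpow_nonneg (by norm_num : (0:ℝ) ≤ 2) _),
          ← Real.rpow_mul hC0.le, ← Real.rpow_mul (by norm_num : (0:ℝ) ≤ 2),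
          ← Real.rpow_mul h1δ.le]
      rw [eL1, eL2, eR]
      ring
    calc (∫ x in U δ, |f x| ^ p₀ ∂μ) ^ (1/p₀)
        ≤ (∏ i ∈ Finset.Icc 1 (m+1), (A * B ^ (((m+1:ℕ):ℝ)+1-(i:ℝ))) ^ (κ ^ i / p₀)) *
          (∫ x in U (1:ℝ), |f x| ^ p ∂μ) ^ (1/p) := trans1
      _ ≤ (C ^ (κ^3/(κ-1)^2) * 2 ^ (γ * (κ^4/(κ-1)^3)) / (1 - δ) ^ (γ * (κ^3/(κ-1)^2))) ^ W *
          (∫ x in U (1:ℝ), |f x| ^ p ∂μ) ^ (1/p) :=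
        mul_le_mul_of_nonneg_right hQle (Real.rpow_nonneg (intnn _ _) _)
  · -- bad case
    have hβs : p ≤ p₀/κ^m := by
      rw [le_div_iff₀ (hκpow m)]; exact hm3
    have hint2 : ¬ Integrable (fun x => |f x| ^ (p₀/κ^m)) (μ.restrict (U 1)) := by
      intro hI
      apply hint
      refine (((integrable_const (1:ℝ)).add hI).mono
        ((hf.abs.pow measurable_const).aestronglyMeasurable)
        (Filter.Eventually.of_forall fun x => ?_))
      have h1 : (0:ℝ) ≤ |f x| ^ (p₀/κ^m) := Real.rpow_nonneg (abs_nonneg _) _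
      have h2 : (0:ℝ) ≤ |f x| ^ p := Real.rpow_nonneg (abs_nonneg _) _
      show ‖|f x| ^ p‖ ≤ ‖1 + |f x| ^ (p₀/κ^m)‖
      rw [Real.norm_eq_abs, Real.norm_eq_abs, abs_of_nonneg h2,
        abs_of_nonneg (by linarith : (0:ℝ) ≤ 1 + |f x| ^ (p₀/κ^m))]
      rcases le_or_gt (|f x|) 1 with hx|hx
      · have : |f x| ^ p ≤ 1 := Real.rpow_le_one (abs_nonneg _) hx hp0.le
        linarith
      · have : |f x| ^ p ≤ |f x| ^ (p₀/κ^m) := Real.rpow_le_rpow_of_exponent_le hx.le hβs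
        linarith
    have hzero : (∫ x in U (1:ℝ), |f x| ^ (p₀/κ^m) ∂μ) = 0 := integral_undef hint2
    have final := chain m hm2 m hm2 le_rfl
    rw [show δ + (1-δ)*(2:ℝ)^((m:ℝ)-(m:ℝ)) = 1 from by
      rw [sub_self, Real.rpow_zero]; ring] at final
    rw [hzero, Real.zero_rpow (by positivity), mul_zero] at final
    have hrhs : 0 ≤ (C ^ (κ^3/(κ-1)^2) * 2 ^ (γ * (κ^4/(κ-1)^3)) / (1 - δ) ^ (γ * (κ^3/(κ-1)^2))) ^ W *
        (∫ x in U (1:ℝ), |f x| ^ p ∂μ) ^ (1/p) :=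
      mul_nonneg (Real.rpow_nonneg (by positivity) _) (Real.rpow_nonneg (intnn _ _) _)
    linarith
end

section
/- (Fundamental identity for integro-differential operators.) Let T>0, let k:[0,T]→ℝ be continuously differentiable, let H∈C¹(ℝ), and let u:[0,T]→ℝ be continuously differentiable. Then for every t∈(0,T] one has H'(u(t))·(d/dt)(k∗u)(t) = (d/dt)(k∗(H∘u))(t) + (−H(u(t)) + H'(u(t))u(t))·k(t) + ∫₀^t (H(u(t−s)) − H(u(t)) − H'(u(t))[u(t−s)−u(t)])·(−k'(s)) ds. -/
open MeasureTheory intervalIntegral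

lemma abs_sub_le_of_mem_uIcc {a b x : ℝ} (h : x ∈ Set.uIcc a b) : |x - a| ≤ |b - a| := by
  rcases le_total a b with hab | hab
  · rw [Set.uIcc_of_le hab] at h
    rw [abs_of_nonneg (by linarith [h.1]), abs_of_nonneg (by linarith)]
    linarith [h.2]
  · rw [Set.uIcc_of_ge hab] at h
    rw [abs_of_nonpos (by linarith [h.2]), abs_of_nonpos (by linarith)]
    linarith [h.1]

lemma conv_hasDerivAt (k f : ℝ → ℝ) (hk : ContDiff ℝ 1 k) (hf : Continuous f) (t : ℝ) :
    HasDerivAt (fun r => ∫ τ in (0:ℝ)..r, k (r - τ) * f τ)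
      (k 0 * f t + ∫ τ in (0:ℝ)..t, deriv k (t - τ) * f τ) t := by
  have hkc : Continuous k := hk.continuous
  have hk' : Continuous (deriv k) := hk.continuous_deriv le_rfl
  have hkd : ∀ x : ℝ, HasDerivAt k (deriv k x) x := fun x =>
    ((hk.differentiable one_ne_zero) x).hasDerivAt
  -- integrability helper
  have hint : ∀ r a b : ℝ, IntervalIntegrable (fun τ => k (r - τ) * f τ) volume a b :=
    fun r a b => ((hkc.comp (continuous_const.sub continuous_id)).mul hf).intervalIntegrable a b
  have hint' : ∀ a b : ℝ, IntervalIntegrable (fun τ => deriv k (t - τ) * f τ) volume a b :=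
    fun a b => ((hk'.comp (continuous_const.sub continuous_id)).mul hf).intervalIntegrable a b
  rw [hasDerivAt_iff_isLittleO, Asymptotics.isLittleO_iff]
  intro c hc
  -- bound for f on uIcc 0 t
  obtain ⟨M0, hM0⟩ := (isCompact_uIcc (a := (0:ℝ)) (b := t)).exists_bound_of_continuousOn
    hf.continuousOn
  set M : ℝ := max M0 0 with hMdef
  have hM : ∀ x ∈ Set.uIcc (0:ℝ) t, |f x| ≤ M := fun x hx => le_trans (hM0 x hx) (le_max_left _ _)
  have hMnn : 0 ≤ M := le_max_right _ _
  -- epsilon for term 2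
  set ε₂ : ℝ := c / (2 * (M * |t| + 1)) with hε₂def
  have hden : 0 < M * |t| + 1 := by positivity
  have hε₂ : 0 < ε₂ := by positivity
  -- continuity of (r, τ) ↦ k (r - τ) * f τ at (t, t)
  have hφ : Continuous (fun p : ℝ × ℝ => k (p.1 - p.2) * f p.2) :=
    (hkc.comp (continuous_fst.sub continuous_snd)).mul (hf.comp continuous_snd)
  have hφt : ContinuousAt (fun p : ℝ × ℝ => k (p.1 - p.2) * f p.2) (t, t) := hφ.continuousAt
  rw [Metric.continuousAt_iff] at hφt
  obtain ⟨δ₁, hδ₁pos, hδ₁⟩ := hφt (c / 2) (by linarith)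
  -- uniform continuity of deriv k on compact K
  set K : Set ℝ := Set.Icc (-(2 * |t| + 1)) (2 * |t| + 1) with hKdef
  have hKuc : UniformContinuousOn (deriv k) K :=
    (isCompact_Icc).uniformContinuousOn_of_continuous hk'.continuousOn
  rw [Metric.uniformContinuousOn_iff] at hKuc
  obtain ⟨δ₂, hδ₂pos, hδ₂⟩ := hKuc ε₂ hε₂
  -- eventual bound
  rw [Metric.eventually_nhds_iff]
  refine ⟨min (min δ₁ δ₂) 1, by positivity, fun r hr => ?_⟩
  rw [Real.dist_eq] at hr
  have hr1 : |r - t| < δ₁ := lt_of_lt_of_le hr (le_trans (min_le_left _ _) (min_le_left _ _))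
  have hr2 : |r - t| < δ₂ := lt_of_lt_of_le hr (le_trans (min_le_left _ _) (min_le_right _ _))
  have hr3 : |r - t| ≤ 1 := le_of_lt (lt_of_lt_of_le hr (min_le_right _ _))
  -- split the integral
  have hsplit : (∫ τ in (0:ℝ)..r, k (r - τ) * f τ) =
      (∫ τ in (0:ℝ)..t, k (r - τ) * f τ) + ∫ τ in t..r, k (r - τ) * f τ :=
    (intervalIntegral.integral_add_adjacent_intervals (hint r 0 t) (hint r t r)).symm
  -- term 1
  have hA : ‖(∫ τ in t..r, k (r - τ) * f τ) - (r - t) * (k 0 * f t)‖ ≤ c / 2 * |r - t| := by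
    have h1 : (∫ τ in t..r, k (r - τ) * f τ) - (r - t) * (k 0 * f t) =
        ∫ τ in t..r, (k (r - τ) * f τ - k 0 * f t) := by
      rw [intervalIntegral.integral_sub (hint r t r)
        (intervalIntegrable_const), intervalIntegral.integral_const]
      simp [smul_eq_mul]
    rw [h1]
    apply intervalIntegral.norm_integral_le_of_norm_le_const
    intro x hx
    have hx' : x ∈ Set.uIcc t r := Set.uIoc_subset_uIcc hx
    have hxt : |x - t| ≤ |r - t| := abs_sub_le_of_mem_uIcc hx'
    have : dist (r, x) (t, t) < δ₁ := by
      rw [Prod.dist_eq]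
      simp only [Real.dist_eq]
      exact max_lt hr1 (lt_of_le_of_lt hxt hr1)
    have := hδ₁ this
    rw [Real.dist_eq] at this
    simp only [sub_self] at this
    exact le_of_lt this
  -- term 2
  have hB : ‖(∫ τ in (0:ℝ)..t, (k (r - τ) * f τ - k (t - τ) * f τ - (r - t) * (deriv k (t - τ) * f τ)))‖
      ≤ c / 2 * |r - t| := by
    have hbound : ∀ τ ∈ Set.uIoc (0:ℝ) t,
        ‖k (r - τ) * f τ - k (t - τ) * f τ - (r - t) * (deriv k (t - τ) * f τ)‖
          ≤ ε₂ * |r - t| * M := by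
      intro τ hτ
      have hτ' : τ ∈ Set.uIcc (0:ℝ) t := Set.uIoc_subset_uIcc hτ
      have hτt : |τ| ≤ |t| := by
        have := abs_sub_le_of_mem_uIcc (a := (0:ℝ)) (b := t) hτ'
        simpa using this
      -- bracket as an integral
      have hbr : k (r - τ) - k (t - τ) - (r - t) * deriv k (t - τ) =
          ∫ ρ in (t - τ)..(r - τ), (deriv k ρ - deriv k (t - τ)) := by
        rw [intervalIntegral.integral_sub ((hk'.intervalIntegrable _ _))
          intervalIntegrable_const, intervalIntegral.integral_const,
          intervalIntegral.integral_deriv_eq_sub (fun x _ => hk.differentiable one_ne_zero x)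
            (hk'.intervalIntegrable _ _)]
        have : r - τ - (t - τ) = r - t := by ring
        rw [this, smul_eq_mul]
      have hbr2 : ‖k (r - τ) - k (t - τ) - (r - t) * deriv k (t - τ)‖ ≤ ε₂ * |r - t| := by
        rw [hbr]
        have := intervalIntegral.norm_integral_le_of_norm_le_const
          (a := t - τ) (b := r - τ) (C := ε₂)
          (f := fun ρ => deriv k ρ - deriv k (t - τ)) ?_
        · have heq : |r - τ - (t - τ)| = |r - t| := by ring_nf
          rw [heq] at this
          exact this
        · intro ρ hρ
          have hρ' : ρ ∈ Set.uIcc (t - τ) (r - τ) := Set.uIoc_subset_uIcc hρ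
          have hρd : |ρ - (t - τ)| ≤ |r - τ - (t - τ)| := abs_sub_le_of_mem_uIcc hρ'
          have hρd' : |ρ - (t - τ)| ≤ |r - t| := by
            have : r - τ - (t - τ) = r - t := by ring
            rwa [this] at hρd
          have htτK : (t - τ) ∈ K := by
            rw [hKdef]
            constructor <;> [skip; skip] <;>
              · have h1 := abs_sub_abs_le_abs_sub t τ
                have h2 := abs_sub τ t
                have h3 := abs_nonneg (t - τ)
                have h4 : |t - τ| ≤ |t| + |τ| := abs_sub _ _
                have h5 : |t - τ| ≤ 2 * |t| := by linarith
                have := abs_le.mp h5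
                linarith [this.1, this.2]
          have hρK : ρ ∈ K := by
            rw [hKdef]
            have h4 : |t - τ| ≤ |t| + |τ| := abs_sub _ _
            have h5 : |t - τ| ≤ 2 * |t| := by linarith
            have h6 : |ρ| ≤ |ρ - (t - τ)| + |t - τ| := by
              calc |ρ| = |(ρ - (t - τ)) + (t - τ)| := by ring_nf
              _ ≤ |ρ - (t - τ)| + |t - τ| := abs_add_le _ _
            have h7 : |ρ| ≤ 2 * |t| + 1 := by linarith
            have := abs_le.mp h7
            exact ⟨this.1, this.2⟩
          have hdist : dist ρ (t - τ) < δ₂ := by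
            rw [Real.dist_eq]
            exact lt_of_le_of_lt hρd' hr2
          have := hδ₂ ρ hρK (t - τ) htτK hdist
          rw [Real.dist_eq] at this
          exact le_of_lt this
      have heq : k (r - τ) * f τ - k (t - τ) * f τ - (r - t) * (deriv k (t - τ) * f τ) =
          (k (r - τ) - k (t - τ) - (r - t) * deriv k (t - τ)) * f τ := by ring
      rw [heq]
      rw [norm_mul]
      exact mul_le_mul hbr2 (hM τ hτ') (norm_nonneg _) (by positivity)
    have := intervalIntegral.norm_integral_le_of_norm_le_const hbound
    have h2 : ε₂ * |r - t| * M * |t - 0| ≤ c / 2 * |r - t| := by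
      have ht0 : |t - (0:ℝ)| = |t| := by ring_nf
      rw [ht0]
      have : ε₂ * |r - t| * M * |t| = ε₂ * (M * |t|) * |r - t| := by ring
      rw [this]
      apply mul_le_mul_of_nonneg_right _ (abs_nonneg _)
      rw [hε₂def]
      rw [div_mul_eq_mul_div, div_le_iff₀ (by linarith)]
      have hMt : 0 ≤ M * |t| := by positivity
      nlinarith
    exact le_trans this h2
  -- combine
  have hkey : (∫ τ in (0:ℝ)..r, k (r - τ) * f τ) - (∫ τ in (0:ℝ)..t, k (t - τ) * f τ)
      - (r - t) • (k 0 * f t + ∫ τ in (0:ℝ)..t, deriv k (t - τ) * f τ) =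
      ((∫ τ in t..r, k (r - τ) * f τ) - (r - t) * (k 0 * f t)) +
      (∫ τ in (0:ℝ)..t, (k (r - τ) * f τ - k (t - τ) * f τ - (r - t) * (deriv k (t - τ) * f τ))) := by
    rw [hsplit, smul_eq_mul]
    rw [intervalIntegral.integral_sub (((hint r 0 t).sub (hint t 0 t)))
      ((hint' 0 t).const_mul _), intervalIntegral.integral_sub (hint r 0 t) (hint t 0 t),
      intervalIntegral.integral_const_mul]
    ring
  calc ‖(∫ τ in (0:ℝ)..r, k (r - τ) * f τ) - (∫ τ in (0:ℝ)..t, k (t - τ) * f τ)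
      - (r - t) • (k 0 * f t + ∫ τ in (0:ℝ)..t, deriv k (t - τ) * f τ)‖
      = ‖((∫ τ in t..r, k (r - τ) * f τ) - (r - t) * (k 0 * f t)) +
      (∫ τ in (0:ℝ)..t, (k (r - τ) * f τ - k (t - τ) * f τ - (r - t) * (deriv k (t - τ) * f τ)))‖ := by
        rw [hkey]
    _ ≤ _ + _ := norm_add_le _ _
    _ ≤ c / 2 * |r - t| + c / 2 * |r - t| := add_le_add hA hB
    _ = c * |r - t| := by ring
    _ = c * ‖r - t‖ := by rw [Real.norm_eq_abs]

/-- Fundamental identity for integro-differential operators of the form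
`d/dt (k ∗ u)`, for continuously differentiable `k`, `u` and `H`. -/
theorem fundamental_identity (T : ℝ) (hT : 0 < T) (k u H : ℝ → ℝ)
    (hk : ContDiff ℝ 1 k) (hu : ContDiff ℝ 1 u) (hH : ContDiff ℝ 1 H) :
    ∀ t ∈ Set.Ioc (0:ℝ) T,
      deriv H (u t) * deriv (fun r => ∫ τ in (0:ℝ)..r, k (r - τ) * u τ) t =
        deriv (fun r => ∫ τ in (0:ℝ)..r, k (r - τ) * H (u τ)) t +
          (-H (u t) + deriv H (u t) * u t) * k t +
          ∫ s in (0:ℝ)..t,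
            (H (u (t - s)) - H (u t) - deriv H (u t) * (u (t - s) - u t)) *
              (-(deriv k s)) := by
  intro t _ht
  have hkc : Continuous k := hk.continuous
  have hk' : Continuous (deriv k) := hk.continuous_deriv le_rfl
  have huc : Continuous u := hu.continuous
  have hHc : Continuous H := hH.continuous
  -- flip lemma
  have hflip : ∀ g : ℝ → ℝ, (∫ τ in (0:ℝ)..t, deriv k (t - τ) * g τ) =
      ∫ s in (0:ℝ)..t, deriv k s * g (t - s) := by
    intro g
    have h1 : (∫ τ in (0:ℝ)..t, deriv k (t - τ) * g τ) =
        ∫ τ in (0:ℝ)..t, (fun s => deriv k s * g (t - s)) (t - τ) := by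
      apply intervalIntegral.integral_congr
      intro x _
      simp only
      have : t - (t - x) = x := by ring
      rw [this]
    rw [h1, intervalIntegral.integral_comp_sub_left (fun s => deriv k s * g (t - s)) t]
    simp
  -- derivatives of the two convolutions
  have h1 : HasDerivAt (fun r => ∫ τ in (0:ℝ)..r, k (r - τ) * u τ)
      (k 0 * u t + ∫ τ in (0:ℝ)..t, deriv k (t - τ) * u τ) t :=
    conv_hasDerivAt k u hk huc t
  have h2 : HasDerivAt (fun r => ∫ τ in (0:ℝ)..r, k (r - τ) * H (u τ))
      (k 0 * H (u t) + ∫ τ in (0:ℝ)..t, deriv k (t - τ) * H (u τ)) t :=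
    conv_hasDerivAt k (fun τ => H (u τ)) hk (hHc.comp huc) t
  rw [h1.deriv, h2.deriv, hflip u, hflip (fun τ => H (u τ))]
  set cc := deriv H (u t) with hcc
  set Iu := ∫ s in (0:ℝ)..t, deriv k s * u (t - s) with hIu
  set IH := ∫ s in (0:ℝ)..t, deriv k s * H (u (t - s)) with hIH
  -- integrabilities
  have hi3 : IntervalIntegrable (deriv k) volume 0 t := hk'.intervalIntegrable _ _
  have hi1 : IntervalIntegrable (fun s => deriv k s * u (t - s)) volume 0 t :=
    (hk'.mul (huc.comp (continuous_const.sub continuous_id))).intervalIntegrable _ _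
  have hi2 : IntervalIntegrable (fun s => deriv k s * H (u (t - s))) volume 0 t :=
    (hk'.mul (hHc.comp (huc.comp (continuous_const.sub continuous_id)))).intervalIntegrable _ _
  have hkint : (∫ s in (0:ℝ)..t, deriv k s) = k t - k 0 :=
    intervalIntegral.integral_deriv_eq_sub (fun x _ => hk.differentiable one_ne_zero x) hi3
  have hJ : (∫ s in (0:ℝ)..t,
        (H (u (t - s)) - H (u t) - cc * (u (t - s) - u t)) * (-(deriv k s)))
      = (H (u t) - cc * u t) * (k t - k 0) + cc * Iu - IH := by
    have hpt : ∀ s : ℝ, (H (u (t - s)) - H (u t) - cc * (u (t - s) - u t)) * (-(deriv k s)) =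
        ((H (u t) - cc * u t) * deriv k s + cc * (deriv k s * u (t - s)))
          - deriv k s * H (u (t - s)) := by intro s; ring
    rw [intervalIntegral.integral_congr (fun x _ => hpt x),
      intervalIntegral.integral_sub ((hi3.const_mul _).add (hi1.const_mul _)) hi2,
      intervalIntegral.integral_add (hi3.const_mul _) (hi1.const_mul _),
      intervalIntegral.integral_const_mul, intervalIntegral.integral_const_mul, hkint]
  rw [hJ]
  ring
end

section
/- Let T>0 and α∈(0,1). Suppose v:[0,T]→ℝ is continuously differentiable with v(0)=0, and φ∈C¹([0,T]). Then for almost all t∈(0,T) one has (g_α∗(φ v'))(t) = φ(t)·(g_α∗v')(t) + ∫₀^t v(σ)·∂_σ( g_α(t−σ)[φ(t)−φ(σ)] ) dσ. -/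
open MeasureTheory intervalIntegral

/-- The Riemann–Liouville kernel `g_β(t) = t^(β-1)/Γ(β)`. -/
noncomputable def RLkernel (β t : ℝ) : ℝ := t ^ (β - 1) / Real.Gamma β

lemma rl_aux_rpow_mul_self {α : ℝ} (hα : 0 < α) (hα1 : α < 1) {x : ℝ} (hx : 0 ≤ x) :
    x ^ (α - 1) * x = x ^ α := by
  rcases eq_or_lt_of_le hx with h | h
  · rw [← h, Real.zero_rpow (sub_ne_zero.mpr hα1.ne), Real.zero_rpow hα.ne', zero_mul]
  · rw [← Real.rpow_add_one h.ne' (α - 1), sub_add_cancel]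

lemma rl_aux_integrable {t r : ℝ} (hr : -1 < r) :
    IntervalIntegrable (fun σ : ℝ => (t - σ) ^ r) volume 0 t := by
  have h := (intervalIntegral.intervalIntegrable_rpow' (a := 0) (b := t) hr).comp_sub_left t
  simpa using h.symm

/-- Commutation identity for the Riemann–Liouville kernel:
`(g_α ∗ (φ v'))(t) = φ(t)(g_α ∗ v')(t) + ∫₀ᵗ v(σ) ∂_σ(g_α(t-σ)[φ(t)-φ(σ)]) dσ`
for a.a. `t ∈ (0,T)`. -/
theorem RL_commutation (T α : ℝ) (hT : 0 < T) (hα : α ∈ Set.Ioo (0:ℝ) 1)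
    (v φ : ℝ → ℝ) (hv : ContDiff ℝ 1 v) (hv0 : v 0 = 0)
    (hφ : ContDiff ℝ 1 φ) :
    ∀ᵐ t ∂(volume.restrict (Set.Ioo (0:ℝ) T)),
      (∫ σ in (0:ℝ)..t, RLkernel α (t - σ) * (φ σ * deriv v σ)) =
        φ t * (∫ σ in (0:ℝ)..t, RLkernel α (t - σ) * deriv v σ) +
          ∫ σ in (0:ℝ)..t,
            v σ * deriv (fun σ' => RLkernel α (t - σ') * (φ t - φ σ')) σ := by
  obtain ⟨hα0, hα1⟩ := hα
  have hΓ : 0 < Real.Gamma α := Real.Gamma_pos_of_pos hα0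
  filter_upwards [self_mem_ae_restrict measurableSet_Ioo] with t ht
  obtain ⟨ht0, htT⟩ := ht
  -- notation
  set F : ℝ → ℝ := fun σ' => RLkernel α (t - σ') * (φ t - φ σ') with hF
  set K : ℝ → ℝ := fun σ => deriv F σ with hK
  have hvd : Differentiable ℝ v := hv.differentiable one_ne_zero
  have hφd : Differentiable ℝ φ := hφ.differentiable one_ne_zero
  have hv'c : Continuous (deriv v) := hv.continuous_deriv le_rfl
  have hφ'c : Continuous (deriv φ) := hφ.continuous_deriv le_rfl
  -- bounds
  obtain ⟨Mφ, hMφ⟩ : ∃ M, ∀ x ∈ Set.Icc (0:ℝ) t, |deriv φ x| ≤ M := by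
    obtain ⟨M, hM⟩ := (isCompact_Icc (a := (0:ℝ)) (b := t)).exists_bound_of_continuousOn
      hφ'c.continuousOn
    exact ⟨M, fun x hx => hM x hx⟩
  have hMφ0 : 0 ≤ Mφ := le_trans (abs_nonneg _) (hMφ 0 ⟨le_rfl, ht0.le⟩)
  obtain ⟨Mv, hMv⟩ : ∃ M, ∀ x ∈ Set.Icc (0:ℝ) t, |v x| ≤ M := by
    obtain ⟨M, hM⟩ := (isCompact_Icc (a := (0:ℝ)) (b := t)).exists_bound_of_continuousOn
      hvd.continuous.continuousOn
    exact ⟨M, fun x hx => hM x hx⟩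
  have hMv0 : 0 ≤ Mv := le_trans (abs_nonneg _) (hMv 0 ⟨le_rfl, ht0.le⟩)
  obtain ⟨Mv', hMv'⟩ : ∃ M, ∀ x ∈ Set.Icc (0:ℝ) t, |deriv v x| ≤ M := by
    obtain ⟨M, hM⟩ := (isCompact_Icc (a := (0:ℝ)) (b := t)).exists_bound_of_continuousOn
      hv'c.continuousOn
    exact ⟨M, fun x hx => hM x hx⟩
  obtain ⟨Mφ2, hMφ2⟩ : ∃ M, ∀ x ∈ Set.Icc (0:ℝ) t, |φ x| ≤ M := by
    obtain ⟨M, hM⟩ := (isCompact_Icc (a := (0:ℝ)) (b := t)).exists_bound_of_continuousOn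
      hφd.continuous.continuousOn
    exact ⟨M, fun x hx => hM x hx⟩
  -- Lipschitz bound for φ
  have hlip : ∀ σ ∈ Set.Icc (0:ℝ) t, |φ t - φ σ| ≤ Mφ * (t - σ) := by
    intro σ hσ
    have heq : φ t - φ σ = ∫ x in σ..t, deriv φ x :=
      (intervalIntegral.integral_deriv_eq_sub (fun x _ => hφd x)
        (hφ'c.intervalIntegrable _ _)).symm
    rw [heq]
    have := intervalIntegral.norm_integral_le_of_norm_le_const (a := σ) (b := t)
      (C := Mφ) (f := deriv φ) ?_
    · simpa [abs_of_nonneg (sub_nonneg.2 hσ.2)] using this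
    · intro x hx
      rw [Set.uIoc_of_le hσ.2] at hx
      exact hMφ x ⟨le_trans hσ.1 hx.1.le, hx.2⟩
  -- F is continuous on [0, t]
  have hFt : F t = 0 := by simp [hF]
  have hFcont : ContinuousOn F (Set.Icc 0 t) := by
    intro σ hσ
    rcases eq_or_lt_of_le hσ.2 with h | h
    · -- σ = t : squeeze
      rw [h]
      rw [ContinuousWithinAt, hFt]
      apply squeeze_zero_norm' (a := fun σ => Mφ / Real.Gamma α * (t - σ) ^ α)
      · filter_upwards [self_mem_nhdsWithin] with σ hσ'
        have h1 : 0 ≤ t - σ := sub_nonneg.2 hσ'.2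
        have h2 : (0:ℝ) ≤ (t - σ) ^ (α - 1) := Real.rpow_nonneg h1 _
        calc ‖F σ‖ = (t - σ) ^ (α - 1) / Real.Gamma α * |φ t - φ σ| := by
              rw [hF]; simp [RLkernel, abs_mul, abs_div, abs_of_nonneg h2, abs_of_pos hΓ]
          _ ≤ (t - σ) ^ (α - 1) / Real.Gamma α * (Mφ * (t - σ)) := by
              apply mul_le_mul_of_nonneg_left (hlip σ hσ') (by positivity)
          _ = Mφ / Real.Gamma α * ((t - σ) ^ (α - 1) * (t - σ)) := by ring
          _ = Mφ / Real.Gamma α * (t - σ) ^ α := by rw [rl_aux_rpow_mul_self hα0 hα1 h1]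
      · have hc : Continuous (fun σ : ℝ => Mφ / Real.Gamma α * (t - σ) ^ α) := by
          apply continuous_const.mul
          exact (continuous_const.sub continuous_id).rpow_const (fun x => Or.inr hα0.le)
        have := (hc.tendsto t).mono_left (nhdsWithin_le_nhds (s := Set.Icc 0 t))
        simpa [Real.zero_rpow hα0.ne'] using this
    · -- σ < t : continuity at a regular point
      have hne : t - σ ≠ 0 := by intro hc; linarith [sub_eq_zero.mp hc]
      apply ContinuousAt.continuousWithinAt
      apply ContinuousAt.mul
      · apply ContinuousAt.div_const
        exact (Real.continuousAt_rpow_const _ _ (Or.inl hne)).comp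
          ((continuous_const.sub continuous_id).continuousAt)
      · exact (continuous_const.sub hφd.continuous).continuousAt
  -- differentiability of F on (0, t), with explicit derivative
  have hFderiv : ∀ σ ∈ Set.Ioo (0:ℝ) t, HasDerivAt F
      ((-1) * (α - 1) * (t - σ) ^ (α - 1 - 1) / Real.Gamma α * (φ t - φ σ)
        + (t - σ) ^ (α - 1) / Real.Gamma α * (-(deriv φ σ))) σ := by
    intro σ hσ
    have hpos : 0 < t - σ := sub_pos.2 hσ.2
    have h1 : HasDerivAt (fun σ' : ℝ => t - σ') (-1) σ := (hasDerivAt_id σ).const_sub t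
    have h2 : HasDerivAt (fun σ' : ℝ => (t - σ') ^ (α - 1))
        ((-1) * (α - 1) * (t - σ) ^ (α - 1 - 1)) σ := h1.rpow_const (Or.inl hpos.ne')
    have h3 : HasDerivAt F _ σ :=
      (h2.div_const (Real.Gamma α)).mul ((hφd σ).hasDerivAt.const_sub (φ t))
    convert h3 using 1
  have hKeq : ∀ σ ∈ Set.Ioo (0:ℝ) t, K σ =
      (-1) * (α - 1) * (t - σ) ^ (α - 1 - 1) / Real.Gamma α * (φ t - φ σ)
        + (t - σ) ^ (α - 1) / Real.Gamma α * (-(deriv φ σ)) := fun σ hσ =>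
    (hFderiv σ hσ).deriv
  -- bound on K
  have hKbound : ∀ σ ∈ Set.Ioo (0:ℝ) t,
      |K σ| ≤ (2 * Mφ / Real.Gamma α) * (t - σ) ^ (α - 1) := by
    intro σ hσ
    have hpos : 0 < t - σ := sub_pos.2 hσ.2
    have hr1 : (0:ℝ) ≤ (t - σ) ^ (α - 1) := Real.rpow_nonneg hpos.le _
    have hr2 : (0:ℝ) ≤ (t - σ) ^ (α - 1 - 1) := Real.rpow_nonneg hpos.le _
    rw [hKeq σ hσ]
    have hb1 : |(-1) * (α - 1) * (t - σ) ^ (α - 1 - 1) / Real.Gamma α * (φ t - φ σ)|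
        ≤ Mφ / Real.Gamma α * (t - σ) ^ (α - 1) := by
      have habs : |(-1 : ℝ) * (α - 1)| ≤ 1 := by
        rw [abs_mul, abs_neg, abs_one, one_mul, abs_of_neg (by linarith : α - 1 < 0)]
        linarith
      calc |(-1) * (α - 1) * (t - σ) ^ (α - 1 - 1) / Real.Gamma α * (φ t - φ σ)|
          = |(-1) * (α - 1)| * ((t - σ) ^ (α - 1 - 1) / Real.Gamma α) * |φ t - φ σ| := by
            rw [abs_mul, abs_div, abs_mul, abs_of_nonneg hr2, abs_of_pos hΓ]; ring
        _ ≤ 1 * ((t - σ) ^ (α - 1 - 1) / Real.Gamma α) * (Mφ * (t - σ)) := by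
            apply mul_le_mul
            · exact mul_le_mul_of_nonneg_right habs (by positivity)
            · exact hlip σ ⟨hσ.1.le, hσ.2.le⟩
            · exact abs_nonneg _
            · positivity
        _ = Mφ / Real.Gamma α * ((t - σ) ^ (α - 1 - 1) * (t - σ)) := by ring
        _ = Mφ / Real.Gamma α * (t - σ) ^ (α - 1) := by
            rw [← Real.rpow_add_one hpos.ne' (α - 1 - 1), sub_add_cancel]
    have hb2 : |(t - σ) ^ (α - 1) / Real.Gamma α * (-(deriv φ σ))|
        ≤ Mφ / Real.Gamma α * (t - σ) ^ (α - 1) := by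
      rw [abs_mul, abs_div, abs_of_nonneg hr1, abs_of_pos hΓ, abs_neg]
      calc (t - σ) ^ (α - 1) / Real.Gamma α * |deriv φ σ|
          ≤ (t - σ) ^ (α - 1) / Real.Gamma α * Mφ :=
            mul_le_mul_of_nonneg_left (hMφ σ ⟨hσ.1.le, hσ.2.le⟩) (by positivity)
        _ = Mφ / Real.Gamma α * (t - σ) ^ (α - 1) := by ring
    calc |_ + _| ≤ _ := abs_add_le _ _
      _ ≤ Mφ / Real.Gamma α * (t - σ) ^ (α - 1) + Mφ / Real.Gamma α * (t - σ) ^ (α - 1) :=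
          add_le_add hb1 hb2
      _ = (2 * Mφ / Real.Gamma α) * (t - σ) ^ (α - 1) := by ring
  -- ae facts on the interval
  have huIoc : Set.uIoc (0:ℝ) t = Set.Ioc 0 t := Set.uIoc_of_le ht0.le
  have hae : ∀ᵐ σ ∂(volume.restrict (Set.uIoc (0:ℝ) t)), σ ∈ Set.Ioo 0 t := by
    rw [huIoc]
    have h1 : ∀ᵐ σ ∂(volume.restrict (Set.Ioc (0:ℝ) t)), σ ∈ Set.Ioc 0 t :=
      ae_restrict_mem measurableSet_Ioc
    have h2 : ∀ᵐ σ ∂(volume.restrict (Set.Ioc (0:ℝ) t)), σ ≠ t := by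
      refine (ae_iff.2 ?_)
      have : {σ : ℝ | ¬ σ ≠ t} = {t} := by ext x; simp
      rw [this]
      exact le_antisymm (le_trans (Measure.restrict_le_self _) (by simp)) bot_le
    filter_upwards [h1, h2] with σ h1 h2
    exact ⟨h1.1, lt_of_le_of_ne h1.2 h2⟩
  -- integrability of the dominating kernel
  have hgint : IntervalIntegrable (fun σ : ℝ => (t - σ) ^ (α - 1)) volume 0 t :=
    rl_aux_integrable (by linarith)
  have hgmeas : Measurable (fun σ : ℝ => RLkernel α (t - σ)) := by
    unfold RLkernel
    exact ((measurable_const.sub measurable_id').pow_const _).div_const _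
  -- integrability of g * v'
  have I1 : IntervalIntegrable (fun σ => RLkernel α (t - σ) * deriv v σ) volume 0 t := by
    apply ((hgint.const_mul (Mv' / Real.Gamma α)).mono_fun'
      ((hgmeas.mul hv'c.measurable).aestronglyMeasurable))
    filter_upwards [hae] with σ hσ
    have hpos : 0 < t - σ := sub_pos.2 hσ.2
    have hr1 : (0:ℝ) ≤ (t - σ) ^ (α - 1) := Real.rpow_nonneg hpos.le _
    simp only [RLkernel, Pi.mul_apply, norm_mul, Real.norm_eq_abs, abs_div, abs_of_nonneg hr1, abs_of_pos hΓ]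
    calc (t - σ) ^ (α - 1) / Real.Gamma α * |deriv v σ|
        ≤ (t - σ) ^ (α - 1) / Real.Gamma α * Mv' :=
          mul_le_mul_of_nonneg_left (hMv' σ ⟨hσ.1.le, hσ.2.le⟩) (by positivity)
      _ = Mv' / Real.Gamma α * (t - σ) ^ (α - 1) := by ring
  -- integrability of g * (φ v')
  have I2 : IntervalIntegrable (fun σ => RLkernel α (t - σ) * (φ σ * deriv v σ)) volume 0 t := by
    apply ((hgint.const_mul (Mφ2 * Mv' / Real.Gamma α)).mono_fun'
      ((hgmeas.mul (hφd.continuous.measurable.mul hv'c.measurable)).aestronglyMeasurable))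
    filter_upwards [hae] with σ hσ
    have hpos : 0 < t - σ := sub_pos.2 hσ.2
    have hr1 : (0:ℝ) ≤ (t - σ) ^ (α - 1) := Real.rpow_nonneg hpos.le _
    have hM20 : 0 ≤ Mφ2 := le_trans (abs_nonneg _) (hMφ2 0 ⟨le_rfl, ht0.le⟩)
    simp only [RLkernel, Pi.mul_apply, norm_mul, Real.norm_eq_abs, abs_div, abs_of_nonneg hr1, abs_of_pos hΓ]
    calc (t - σ) ^ (α - 1) / Real.Gamma α * (|φ σ| * |deriv v σ|)
        ≤ (t - σ) ^ (α - 1) / Real.Gamma α * (Mφ2 * Mv') := by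
          apply mul_le_mul_of_nonneg_left _ (by positivity)
          exact mul_le_mul (hMφ2 σ ⟨hσ.1.le, hσ.2.le⟩) (hMv' σ ⟨hσ.1.le, hσ.2.le⟩)
            (abs_nonneg _) hM20
      _ = Mφ2 * Mv' / Real.Gamma α * (t - σ) ^ (α - 1) := by ring
  -- integrability of v' * F
  have I3 : IntervalIntegrable (fun σ => deriv v σ * F σ) volume 0 t := by
    apply ContinuousOn.intervalIntegrable
    rw [Set.uIcc_of_le ht0.le]
    exact hv'c.continuousOn.mul hFcont
  -- integrability of v * K
  have I4 : IntervalIntegrable (fun σ => v σ * K σ) volume 0 t := by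
    apply ((hgint.const_mul (Mv * (2 * Mφ / Real.Gamma α))).mono_fun'
      ((hvd.continuous.measurable.mul (measurable_deriv F)).aestronglyMeasurable))
    filter_upwards [hae] with σ hσ
    have hpos : 0 < t - σ := sub_pos.2 hσ.2
    have hr1 : (0:ℝ) ≤ (t - σ) ^ (α - 1) := Real.rpow_nonneg hpos.le _
    simp only [Pi.mul_apply, norm_mul, Real.norm_eq_abs]
    calc |v σ| * |K σ| ≤ Mv * ((2 * Mφ / Real.Gamma α) * (t - σ) ^ (α - 1)) :=
          mul_le_mul (hMv σ ⟨hσ.1.le, hσ.2.le⟩) (hKbound σ hσ) (abs_nonneg _) hMv0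
      _ = Mv * (2 * Mφ / Real.Gamma α) * (t - σ) ^ (α - 1) := by ring
  -- integration by parts
  have hIBP : (∫ σ in (0:ℝ)..t, (deriv v σ * F σ + v σ * K σ)) = 0 := by
    have := intervalIntegral.integral_eq_sub_of_hasDeriv_right_of_le ht0.le
      (f := fun σ => v σ * F σ) (f' := fun σ => deriv v σ * F σ + v σ * K σ)
      (hvd.continuous.continuousOn.mul hFcont)
      (fun σ hσ => ((hvd σ).hasDerivAt.mul
        (hFderiv σ hσ).differentiableAt.hasDerivAt).hasDerivWithinAt)
      (I3.add I4)
    rw [this]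
    simp only [hv0, zero_mul, sub_zero]
    exact mul_eq_zero_of_right _ hFt
  have hsplit : (∫ σ in (0:ℝ)..t, deriv v σ * F σ) + (∫ σ in (0:ℝ)..t, v σ * K σ) = 0 := by
    rw [← intervalIntegral.integral_add I3 I4]; exact hIBP
  -- expand ∫ v' F
  have hexp : (∫ σ in (0:ℝ)..t, deriv v σ * F σ) =
      φ t * (∫ σ in (0:ℝ)..t, RLkernel α (t - σ) * deriv v σ)
        - ∫ σ in (0:ℝ)..t, RLkernel α (t - σ) * (φ σ * deriv v σ) := by
    have : ∀ σ, deriv v σ * F σ =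
        φ t * (RLkernel α (t - σ) * deriv v σ) - RLkernel α (t - σ) * (φ σ * deriv v σ) := by
      intro σ; rw [hF]; ring
    rw [intervalIntegral.integral_congr (fun σ _ => this σ),
      intervalIntegral.integral_sub (I1.const_mul (φ t)) I2,
      intervalIntegral.integral_const_mul]
  rw [hexp] at hsplit
  linarith
end

section
/- Let T>0 and α∈(0,1). Suppose v:[0,T]→ℝ is continuously differentiable, nonnegative, and v(0)=0, and φ∈C¹([0,T]) is nondecreasing. Then for almost all t∈(0,T) one has (g_α∗(φ v'))(t) ≥ φ(t)·(g_α∗v')(t) − ∫₀^t g_α(t−σ)·φ'(σ)·v(σ) dσ. -/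
open MeasureTheory intervalIntegral

/-- Commutation inequality for the Riemann–Liouville kernel: if `v ≥ 0`,
`v(0)=0` and `φ` is nondecreasing, then for a.a. `t ∈ (0,T)`,
`(g_α ∗ (φ v'))(t) ≥ φ(t)(g_α ∗ v')(t) − ∫₀ᵗ g_α(t-σ) φ'(σ) v(σ) dσ`. -/
theorem RL_commutation_ineq (T α : ℝ) (hT : 0 < T) (hα : α ∈ Set.Ioo (0:ℝ) 1)
    (v φ : ℝ → ℝ) (hv : ContDiff ℝ 1 v) (hvpos : ∀ t ∈ Set.Icc (0:ℝ) T, 0 ≤ v t)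
    (hv0 : v 0 = 0) (hφ : ContDiff ℝ 1 φ)
    (hφmono : MonotoneOn φ (Set.Icc 0 T)) :
    ∀ᵐ t ∂(volume.restrict (Set.Ioo (0:ℝ) T)),
      (∫ σ in (0:ℝ)..t, RLkernel α (t - σ) * (φ σ * deriv v σ)) ≥
        φ t * (∫ σ in (0:ℝ)..t, RLkernel α (t - σ) * deriv v σ) -
          ∫ σ in (0:ℝ)..t, RLkernel α (t - σ) * deriv φ σ * v σ := by
  obtain ⟨hα0, hα1⟩ := hα
  have hΓ : 0 < Real.Gamma α := Real.Gamma_pos_of_pos hα0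
  have hvc : Continuous v := hv.continuous
  have hv' : Continuous (deriv v) := hv.continuous_deriv le_rfl
  have hφc : Continuous φ := hφ.continuous
  have hφ' : Continuous (deriv φ) := hφ.continuous_deriv le_rfl
  rw [ae_restrict_iff' measurableSet_Ioo]
  refine Filter.Eventually.of_forall fun t ht => ?_
  obtain ⟨ht0, htT⟩ := ht
  -- kernel integrability on [0, t]
  have hker : IntervalIntegrable (fun σ => RLkernel α (t - σ)) volume 0 t := by
    have h1 : IntervalIntegrable (fun x : ℝ => x ^ (α - 1)) volume 0 t :=
      intervalIntegral.intervalIntegrable_rpow' (by linarith)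
    have h2 := (h1.comp_sub_left t).symm
    simpa [RLkernel] using h2.div_const (Real.Gamma α)
  -- kernel continuity away from t
  have hkerC : ContinuousOn (fun σ => RLkernel α (t - σ)) (Set.Iio t) := by
    have : ContinuousOn (fun σ : ℝ => (t - σ) ^ (α - 1)) (Set.Iio t) :=
      ContinuousOn.rpow_const (continuousOn_const.sub continuousOn_id)
        (fun x hx => Or.inl (sub_pos.mpr hx).ne')
    simpa [RLkernel] using this.div_const (Real.Gamma α)
  set k1 : ℝ → ℝ := fun σ => RLkernel α (t - σ) * (φ σ * deriv v σ) with hk1def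
  set k2 : ℝ → ℝ := fun σ => RLkernel α (t - σ) * deriv v σ with hk2def
  set k3 : ℝ → ℝ := fun σ => RLkernel α (t - σ) * deriv φ σ * v σ with hk3def
  have hk3eq : k3 = fun σ => RLkernel α (t - σ) * (deriv φ σ * v σ) := by
    funext σ; simp [hk3def, mul_assoc]
  have hk1int : IntervalIntegrable k1 volume 0 t :=
    hker.mul_continuousOn (hφc.mul hv').continuousOn
  have hk2int : IntervalIntegrable k2 volume 0 t :=
    hker.mul_continuousOn hv'.continuousOn
  have hk3int : IntervalIntegrable k3 volume 0 t := by
    rw [hk3eq]; exact hker.mul_continuousOn (hφ'.mul hvc).continuousOn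
  -- continuity of k's on Iio t
  have hk1C : ContinuousOn k1 (Set.Iio t) := hkerC.mul (hφc.mul hv').continuousOn
  have hk2C : ContinuousOn k2 (Set.Iio t) := hkerC.mul hv'.continuousOn
  have hk3C : ContinuousOn k3 (Set.Iio t) := by
    rw [hk3eq]; exact hkerC.mul (hφ'.mul hvc).continuousOn
  set I1 : ℝ → ℝ := fun s => ∫ σ in (0:ℝ)..s, k1 σ with hI1def
  set I2 : ℝ → ℝ := fun s => ∫ σ in (0:ℝ)..s, k2 σ with hI2def
  set I3 : ℝ → ℝ := fun s => ∫ σ in (0:ℝ)..s, k3 σ with hI3def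
  set H : ℝ → ℝ := fun s => I1 s - φ s * I2 s + I3 s with hHdef
  -- continuity of H on [0, t]
  have huicc : Set.uIcc (0:ℝ) t = Set.Icc 0 t := Set.uIcc_of_le ht0.le
  have hIcont : ∀ (k : ℝ → ℝ), IntervalIntegrable k volume 0 t →
      ContinuousOn (fun s => ∫ σ in (0:ℝ)..s, k σ) (Set.Icc 0 t) := by
    intro k hk
    have := intervalIntegral.continuousOn_primitive_interval
      (f := k) (μ := volume) (a := (0:ℝ)) (b := t) ?_
    · rwa [huicc] at this
    · rw [huicc]
      exact (intervalIntegrable_iff_integrableOn_Icc_of_le ht0.le).mp hk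
  have hHcont : ContinuousOn H (Set.Icc 0 t) :=
    ((hIcont k1 hk1int).sub (hφc.continuousOn.mul (hIcont k2 hk2int))).add
      (hIcont k3 hk3int)
  -- derivative of H on (0, t)
  have hHderiv : ∀ s ∈ Set.Ioo (0:ℝ) t,
      HasDerivAt H (deriv φ s * (RLkernel α (t - s) * v s - I2 s)) s := by
    intro s hs
    obtain ⟨hs0, hst⟩ := hs
    have hsub : Set.uIcc (0:ℝ) s ⊆ Set.uIcc (0:ℝ) t :=
      Set.uIcc_subset_uIcc (by simp [huicc, ht0.le])
        (by simp [huicc]; exact ⟨hs0.le, hst.le⟩)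
    have hsIio : s ∈ Set.Iio t := hst
    have hderivI : ∀ (k : ℝ → ℝ), IntervalIntegrable k volume 0 t →
        ContinuousOn k (Set.Iio t) →
        HasDerivAt (fun u => ∫ σ in (0:ℝ)..u, k σ) (k s) s := by
      intro k hk hkC
      exact intervalIntegral.integral_hasDerivAt_right (hk.mono_set hsub)
        (hkC.stronglyMeasurableAtFilter isOpen_Iio s hsIio)
        (hkC.continuousAt (Iio_mem_nhds hst))
    have hd1 : HasDerivAt I1 (k1 s) s := hderivI k1 hk1int hk1C
    have hd2 : HasDerivAt I2 (k2 s) s := hderivI k2 hk2int hk2C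
    have hd3 : HasDerivAt I3 (k3 s) s := hderivI k3 hk3int hk3C
    have hdφ : HasDerivAt φ (deriv φ s) s :=
      ((hφ.differentiable one_ne_zero) s).hasDerivAt
    have hdH : HasDerivAt H (k1 s - (deriv φ s * I2 s + φ s * k2 s) + k3 s) s :=
      (hd1.sub (hdφ.mul hd2)).add hd3
    have heq : k1 s - (deriv φ s * I2 s + φ s * k2 s) + k3 s
        = deriv φ s * (RLkernel α (t - s) * v s - I2 s) := by
      simp only [hk1def, hk2def, hk3def]; ring
    rwa [heq] at hdH
  -- nonnegativity of deriv φ on (0,T)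
  have hφ'nonneg : ∀ s ∈ Set.Ioo (0:ℝ) T, 0 ≤ deriv φ s := by
    intro s hs
    obtain ⟨hs0, hsT⟩ := hs
    have hdφ : HasDerivAt φ (deriv φ s) s :=
      ((hφ.differentiable one_ne_zero) s).hasDerivAt
    rw [hasDerivAt_iff_tendsto_slope] at hdφ
    refine ge_of_tendsto hdφ ?_
    have hmem : Set.Icc (0:ℝ) T ∈ nhds s := Icc_mem_nhds hs0 hsT
    filter_upwards [mem_nhdsWithin_of_mem_nhds hmem, self_mem_nhdsWithin]
      with y hy hyne
    have hsmem : s ∈ Set.Icc (0:ℝ) T := ⟨hs0.le, hsT.le⟩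
    rcases lt_or_gt_of_ne (Ne.symm hyne : s ≠ y) with h | h
    · rw [slope_def_field]
      exact div_nonneg (sub_nonneg.mpr (hφmono hsmem hy h.le)) (by linarith)
    · rw [slope_def_field, div_nonneg_iff]
      right
      exact ⟨sub_nonpos.mpr (hφmono hy hsmem h.le), by linarith⟩
  -- the key pointwise estimate: I2 s ≤ g(t-s) v s for s ∈ (0,t)
  have hkey : ∀ s ∈ Set.Ioo (0:ℝ) t, I2 s ≤ RLkernel α (t - s) * v s := by
    intro s hs
    obtain ⟨hs0, hst⟩ := hs
    have huicc' : Set.uIcc (0:ℝ) s = Set.Icc 0 s := Set.uIcc_of_le hs0.le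
    set u' : ℝ → ℝ := fun σ => ((α - 1) * (t - σ) ^ (α - 2) * (-1)) / Real.Gamma α
      with hu'def
    have hu : ∀ x ∈ Set.uIcc (0:ℝ) s,
        HasDerivAt (fun σ => RLkernel α (t - σ)) (u' x) x := by
      intro x hx
      rw [huicc'] at hx
      have hxt : (0:ℝ) < t - x := by
        have := hx.2; linarith
      have h1 : HasDerivAt (fun y : ℝ => y ^ (α - 1))
          ((α - 1) * (t - x) ^ (α - 1 - 1)) (t - x) :=
        Real.hasDerivAt_rpow_const (Or.inl hxt.ne')
      have h2 : HasDerivAt (fun σ : ℝ => t - σ) (-1) x :=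
        (hasDerivAt_id x).const_sub t
      have h3 := (h1.comp x h2).div_const (Real.Gamma α)
      have he : α - 1 - 1 = α - 2 := by ring
      rw [he] at h3
      exact h3
    have hvd : ∀ x ∈ Set.uIcc (0:ℝ) s, HasDerivAt v (deriv v x) x :=
      fun x _ => ((hv.differentiable one_ne_zero) x).hasDerivAt
    have hu'int : IntervalIntegrable u' volume 0 s := by
      apply ContinuousOn.intervalIntegrable
      rw [huicc']
      apply ContinuousOn.div_const
      apply ContinuousOn.mul
      apply ContinuousOn.mul continuousOn_const
      · exact ContinuousOn.rpow_const (continuousOn_const.sub continuousOn_id)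
          (fun x hx => Or.inl (by
            have h2 := hx.2
            have h3 : (0:ℝ) < t - x := by linarith
            exact h3.ne'))
      · exact continuousOn_const
    have hibp := intervalIntegral.integral_mul_deriv_eq_deriv_mul hu hvd hu'int
      (hv'.intervalIntegrable 0 s)
    have hnn : 0 ≤ ∫ x in (0:ℝ)..s, u' x * v x := by
      apply intervalIntegral.integral_nonneg hs0.le
      intro x hx
      apply mul_nonneg
      · have hxt : (0:ℝ) ≤ t - x := by have := hx.2; linarith
        show 0 ≤ (α - 1) * (t - x) ^ (α - 2) * (-1) / Real.Gamma α
        have h6 : (α - 1) * (t - x) ^ (α - 2) * (-1) = (1 - α) * (t - x) ^ (α - 2) := by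
          ring
        rw [h6]
        exact div_nonneg (mul_nonneg (by linarith) (Real.rpow_nonneg hxt _)) hΓ.le
      · exact hvpos x ⟨hx.1, by linarith [hx.2]⟩
    have : I2 s = RLkernel α (t - s) * v s - ∫ x in (0:ℝ)..s, u' x * v x := by
      rw [hI2def]
      simp only [hk2def]
      rw [hibp, hv0]
      ring
    linarith
  -- H is monotone on [0,t]
  have hmono : MonotoneOn H (Set.Icc 0 t) := by
    apply monotoneOn_of_deriv_nonneg (convex_Icc 0 t) hHcont
    · rw [interior_Icc]
      exact fun s hs => ((hHderiv s hs).differentiableAt).differentiableWithinAt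
    · rw [interior_Icc]
      intro s hs
      rw [(hHderiv s hs).deriv]
      exact mul_nonneg (hφ'nonneg s ⟨hs.1, lt_trans hs.2 htT⟩)
        (sub_nonneg.mpr (hkey s hs))
  have hH0 : H 0 = 0 := by
    simp [hHdef, hI1def, hI2def, hI3def, intervalIntegral.integral_same]
  have hHt : 0 ≤ H t := by
    rw [← hH0]
    exact hmono (by simp [ht0.le]) (by simp [ht0.le]) ht0.le
  have : H t = I1 t - φ t * I2 t + I3 t := rfl
  rw [this] at hHt
  simp only [hI1def, hI2def, hI3def] at hHt
  linarith [hHt]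
end
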